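/- Let β₁,…,β₈ be vectors in a Euclidean space such that P = {∑_{j=1}^8 ε_j β_j : ε_j ∈ {±1}, ∏_j ε_j = 1} is an admissible subsystem of roots with exactly 2⁷ = 128 distinct elements, normalized so that the maximal norm of elements of P is 1. Then, up to permutation of indices and sign changes, the Gram matrix satisfies ⟨β_i, β_j⟩ = (1/8)δ_{ij}. -/

import Mathlib

open RealInnerProductSpace

variable {V : Type*} [NormedAddCommGroup V] [InnerProductSpace ℝ V]

/-- A root system in a Euclidean space, without the spanning condition. -/
def IsRootSet (R : Set V) : Prop :=
  R.Finite ∧ (0 : V) ∉ R ∧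
  (∀ α ∈ R, ∀ t : ℝ, t • α ∈ R → t = 1 ∨ t = -1) ∧
  (∀ α ∈ R, ∀ β ∈ R, ∃ n : ℤ, 2 * ⟪α, β⟫ / ⟪α, α⟫ = (n : ℝ)) ∧
  (∀ α ∈ R, ∀ v ∈ R, v - (2 * ⟪α, v⟫ / ⟪α, α⟫) • α ∈ R)

/-- A root system: a finite spanning set, not containing `0`, with `±α` the only
multiples of each root, satisfying integrality and closed under reflections. -/
def IsRootSystem (R : Set V) : Prop :=
  IsRootSet R ∧ Submodule.span ℝ R = ⊤

/-- A subsystem of roots: a set spanning `V` contained in some root system of `V`. -/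
def IsSubsystem (P : Set V) : Prop :=
  Submodule.span ℝ P = ⊤ ∧ ∃ R : Set V, IsRootSystem R ∧ P ⊆ R

/-- The reflection closure of `P`: the minimal set containing `P` and closed under
the reflections `s_α` for `α` in it, i.e. the minimal root system `P̄` containing `P`. -/
inductive ReflClosure (P : Set V) : V → Prop
  | base : ∀ v ∈ P, ReflClosure P v
  | refl : ∀ α v, ReflClosure P α → ReflClosure P v →
      ReflClosure P (v - (2 * ⟪α, v⟫ / ⟪α, α⟫) • α)

/-- `P` is admissible if it is a subsystem of roots and `P̄ \ P` is a root system
(in the subspace it spans). -/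
def IsAdmissible (P : Set V) : Prop :=
  IsSubsystem P ∧ IsRootSet ({v | ReflClosure P v} \ P)

namespace Stmt15Aux

variable {V : Type*} [NormedAddCommGroup V] [InnerProductSpace ℝ V]

variable {V : Type*} [NormedAddCommGroup V] [InnerProductSpace ℝ V]

def vv (β : Fin 8 → V) (ε : Fin 8 → ℝ) : V := ∑ j, ε j • β j

def Sg (ε : Fin 8 → ℝ) : Prop := ∀ j, ε j = 1 ∨ ε j = -1

def flip2 (i j : Fin 8) (ε : Fin 8 → ℝ) : Fin 8 → ℝ :=
  fun m => if m = i ∨ m = j then -ε m else ε m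

lemma sg_sq {ε : Fin 8 → ℝ} (h : Sg ε) (m : Fin 8) : ε m * ε m = 1 := by
  rcases h m with h' | h' <;> rw [h'] <;> norm_num

lemma sg_ne {ε : Fin 8 → ℝ} (h : Sg ε) (m : Fin 8) : ε m ≠ 0 := by
  rcases h m with h' | h' <;> rw [h'] <;> norm_num

lemma flip2_left (i j : Fin 8) (ε : Fin 8 → ℝ) : flip2 i j ε i = -ε i := by simp [flip2]

lemma flip2_right (i j : Fin 8) (ε : Fin 8 → ℝ) : flip2 i j ε j = -ε j := by simp [flip2]

lemma flip2_other {i j m : Fin 8} (h1 : m ≠ i) (h2 : m ≠ j) (ε : Fin 8 → ℝ) :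
    flip2 i j ε m = ε m := by simp [flip2, h1, h2]

lemma flip2_comm (i j : Fin 8) (ε : Fin 8 → ℝ) : flip2 i j ε = flip2 j i ε := by
  funext m; simp [flip2, or_comm]

lemma flip2_flip2 (i j : Fin 8) (ε : Fin 8 → ℝ) : flip2 i j (flip2 i j ε) = ε := by
  funext m; by_cases h : m = i ∨ m = j <;> simp [flip2, h]

lemma Sg.flip2 {ε : Fin 8 → ℝ} (h : Sg ε) (i j : Fin 8) : Sg (flip2 i j ε) := by
  intro m; by_cases hm : m = i ∨ m = j
  · rcases h m with h' | h' <;> simp [Stmt15Aux.flip2, hm, h']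
  · simpa [Stmt15Aux.flip2, hm] using h m

lemma Sg.neg {ε : Fin 8 → ℝ} (h : Sg ε) : Sg (fun m => -ε m) := by
  intro m; rcases h m with h' | h' <;> simp [h']

lemma decomp_sum {M : Type*} [AddCommMonoid M] (f : Fin 8 → M) {i j : Fin 8} (hij : i ≠ j) :
    ∑ m, f m = f i + f j + ∑ m ∈ (Finset.univ.erase i).erase j, f m := by
  have h1 : ∑ m, f m = f i + ∑ m ∈ Finset.univ.erase i, f m :=
    (Finset.add_sum_erase _ f (Finset.mem_univ i)).symm
  have hj : j ∈ Finset.univ.erase i := Finset.mem_erase.2 ⟨Ne.symm hij, Finset.mem_univ j⟩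
  have h2 : ∑ m ∈ Finset.univ.erase i, f m = f j + ∑ m ∈ (Finset.univ.erase i).erase j, f m :=
    (Finset.add_sum_erase _ f hj).symm
  rw [h1, h2, add_assoc]

lemma decomp_prod (f : Fin 8 → ℝ) {i j : Fin 8} (hij : i ≠ j) :
    ∏ m, f m = f i * (f j * ∏ m ∈ (Finset.univ.erase i).erase j, f m) := by
  have h1 : ∏ m, f m = f i * ∏ m ∈ Finset.univ.erase i, f m :=
    (Finset.mul_prod_erase _ f (Finset.mem_univ i)).symm
  have hj : j ∈ Finset.univ.erase i := Finset.mem_erase.2 ⟨Ne.symm hij, Finset.mem_univ j⟩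
  have h2 : ∏ m ∈ Finset.univ.erase i, f m = f j * ∏ m ∈ (Finset.univ.erase i).erase j, f m :=
    (Finset.mul_prod_erase _ f hj).symm
  rw [h1, h2]

lemma prod_flip2 {i j : Fin 8} (hij : i ≠ j) (ε : Fin 8 → ℝ) :
    ∏ m, flip2 i j ε m = ∏ m, ε m := by
  rw [decomp_prod (flip2 i j ε) hij, decomp_prod ε hij, flip2_left, flip2_right]
  have : ∏ m ∈ (Finset.univ.erase i).erase j, flip2 i j ε m
      = ∏ m ∈ (Finset.univ.erase i).erase j, ε m := by
    apply Finset.prod_congr rfl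
    intro m hm
    rcases Finset.mem_erase.1 hm with ⟨hmj, hm'⟩
    rcases Finset.mem_erase.1 hm' with ⟨hmi, _⟩
    exact flip2_other hmi hmj ε
  rw [this]; ring

lemma sum_flip2_mul {i j : Fin 8} (hij : i ≠ j) (ε g : Fin 8 → ℝ) :
    ∑ m, flip2 i j ε m * g m = (∑ m, ε m * g m) - 2*(ε i * g i) - 2*(ε j * g j) := by
  rw [decomp_sum (fun m => flip2 i j ε m * g m) hij, decomp_sum (fun m => ε m * g m) hij]
  have : ∑ m ∈ (Finset.univ.erase i).erase j, flip2 i j ε m * g m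
      = ∑ m ∈ (Finset.univ.erase i).erase j, ε m * g m := by
    apply Finset.sum_congr rfl
    intro m hm
    rcases Finset.mem_erase.1 hm with ⟨hmj, hm'⟩
    rcases Finset.mem_erase.1 hm' with ⟨hmi, _⟩
    rw [flip2_other hmi hmj]
  rw [this, flip2_left, flip2_right]; ring

lemma vv_flip2 (β : Fin 8 → V) {i j : Fin 8} (hij : i ≠ j) (ε : Fin 8 → ℝ) :
    vv β (flip2 i j ε) = vv β ε - (2*ε i) • β i - (2*ε j) • β j := by
  unfold vv
  rw [decomp_sum (fun m => flip2 i j ε m • β m) hij, decomp_sum (fun m => ε m • β m) hij]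
  have : ∑ m ∈ (Finset.univ.erase i).erase j, flip2 i j ε m • β m
      = ∑ m ∈ (Finset.univ.erase i).erase j, ε m • β m := by
    apply Finset.sum_congr rfl
    intro m hm
    rcases Finset.mem_erase.1 hm with ⟨hmj, hm'⟩
    rcases Finset.mem_erase.1 hm' with ⟨hmi, _⟩
    rw [flip2_other hmi hmj]
  rw [this, flip2_left, flip2_right]
  generalize (∑ m ∈ (Finset.univ.erase i).erase j, ε m • β m) = S
  module

lemma vv_neg (β : Fin 8 → V) (ε : Fin 8 → ℝ) : vv β (fun m => -ε m) = - vv β ε := by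
  simp [vv, neg_smul, Finset.sum_neg_distrib]

lemma inner_vv_right (β : Fin 8 → V) (w : V) (ε : Fin 8 → ℝ) :
    ⟪w, vv β ε⟫ = ∑ m, ε m * ⟪w, β m⟫ := by
  simp [vv, inner_sum, real_inner_smul_right]

lemma inner_vv_left (β : Fin 8 → V) (w : V) (ε : Fin 8 → ℝ) :
    ⟪vv β ε, w⟫ = ∑ m, ε m * ⟪β m, w⟫ := by
  simp [vv, sum_inner, real_inner_smul_left]

lemma sum_self {ε : Fin 8 → ℝ} (h : Sg ε) : ∑ m, ε m * ε m = 8 := by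
  rw [Finset.sum_congr rfl (fun m _ => sg_sq h m)]
  simp

lemma eq_of_inner {a b : V} {t : ℝ} (ha : ⟪a,a⟫ = t) (hb : ⟪b,b⟫ = t) (hab : ⟪a,b⟫ = t) :
    a = b := by
  have h0 : ⟪a - b, a - b⟫ = 0 := by
    simp only [inner_sub_left, inner_sub_right]
    rw [real_inner_comm b a] at *
    rw [ha, hb, hab]; ring
  exact sub_eq_zero.1 (inner_self_eq_zero.1 h0)

def mE (ε : Fin 8 → ℝ) : Prop := Sg ε ∧ (∏ j, ε j) = 1

lemma mE.flip2 {ε : Fin 8 → ℝ} (h : mE ε) {i j : Fin 8} (hij : i ≠ j) :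
    mE (flip2 i j ε) := ⟨h.1.flip2 i j, by rw [prod_flip2 hij]; exact h.2⟩

lemma mE.neg {ε : Fin 8 → ℝ} (h : mE ε) : mE (fun m => -ε m) := by
  refine ⟨h.1.neg, ?_⟩
  have : ∏ m : Fin 8, (-ε m) = (∏ m : Fin 8, (-1 : ℝ)) * ∏ m : Fin 8, ε m := by
    rw [← Finset.prod_mul_distrib]; apply Finset.prod_congr rfl; intro m _; ring
  rw [this, h.2, Finset.prod_const]
  norm_num

lemma mE_one : mE (fun _ : Fin 8 => (1:ℝ)) := by
  constructor
  · intro j; left; rfl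
  · simp

lemma filter_card_of_sum (s : Finset (Fin 8)) (f : Fin 8 → ℝ)
    (hf : ∀ m ∈ s, f m = 1 ∨ f m = -1) (t : ℕ)
    (hsum : ∑ m ∈ s, f m = (s.card : ℝ) - 2*t) :
    (s.filter (fun m => f m = -1)).card = t := by
  classical
  have hsplit := Finset.sum_filter_add_sum_filter_not s (fun m => f m = -1) f
  have h1 : ∑ m ∈ s.filter (fun m => f m = -1), f m
      = -((s.filter (fun m => f m = -1)).card : ℝ) := by
    rw [Finset.sum_congr rfl (fun m hm => (Finset.mem_filter.1 hm).2)]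
    simp
  have h2 : ∑ m ∈ s.filter (fun m => ¬ f m = -1), f m
      = ((s.filter (fun m => ¬ f m = -1)).card : ℝ) := by
    have hone : ∀ m ∈ s.filter (fun m => ¬ f m = -1), f m = 1 := by
      intro m hm
      rcases Finset.mem_filter.1 hm with ⟨hms, hmne⟩
      rcases hf m hms with h | h
      · exact h
      · exact absurd h hmne
    rw [Finset.sum_congr rfl hone]
    simp
  have hcards : (s.filter (fun m => f m = -1)).card
      + (s.filter (fun m => ¬ f m = -1)).card = s.card :=
    Finset.card_filter_add_card_filter_not _
  have hcardsR : ((s.filter (fun m => f m = -1)).card : ℝ)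
      + ((s.filter (fun m => ¬ f m = -1)).card : ℝ) = (s.card : ℝ) := by
    exact_mod_cast congrArg (Nat.cast : ℕ → ℝ) hcards
  have : ((s.filter (fun m => f m = -1)).card : ℝ) = (t : ℝ) := by
    rw [h1, h2] at hsplit
    linarith [hsplit, hsum]
  exact_mod_cast this

lemma exists_out3 (i j b : Fin 8) : ∃ m : Fin 8, m ≠ i ∧ m ≠ j ∧ m ≠ b := by
  classical
  have hcard : ({i, j, b} : Finset (Fin 8)).card ≤ 3 := by
    apply le_trans (Finset.card_insert_le _ _)
    have := Finset.card_insert_le j ({b} : Finset (Fin 8))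
    simp at this ⊢
    omega
  have : (({i, j, b} : Finset (Fin 8))ᶜ).Nonempty := by
    rw [← Finset.card_pos, Finset.card_compl]
    have : Fintype.card (Fin 8) = 8 := by simp
    omega
  rcases this with ⟨m, hm⟩
  rw [Finset.mem_compl] at hm
  refine ⟨m, ?_, ?_, ?_⟩ <;> intro h <;> apply hm <;> simp [h]

lemma exists_pair_out2 (k n : Fin 8) : ∃ l m : Fin 8, l ≠ m ∧ l ≠ k ∧ l ≠ n ∧ m ≠ k ∧ m ≠ n := by
  classical
  have hcard : ({k, n} : Finset (Fin 8)).card ≤ 2 := by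
    apply le_trans (Finset.card_insert_le _ _); simp
  have h2 : 1 < (({k, n} : Finset (Fin 8))ᶜ).card := by
    rw [Finset.card_compl]
    have : Fintype.card (Fin 8) = 8 := by simp
    omega
  rcases Finset.one_lt_card.1 h2 with ⟨l, hl, m, hm, hlm⟩
  rw [Finset.mem_compl] at hl hm
  simp only [Finset.mem_insert, Finset.mem_singleton] at hl hm
  push_neg at hl hm
  exact ⟨l, m, hlm, hl.1, hl.2, hm.1, hm.2⟩

structure Ctx (β : Fin 8 → V) (P R : Set V) : Prop where
  hPdef : P = {v : V | ∃ ε : Fin 8 → ℝ,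
      (∀ j, ε j = 1 ∨ ε j = -1) ∧ (∏ j, ε j) = 1 ∧ v = ∑ j, ε j • β j}
  hR : IsRootSet R
  hPR : P ⊆ R
  hQ : IsRootSet ({v | ReflClosure P v} \ P)
  hinj : ∀ ε ε', mE ε → mE ε' → vv β ε = vv β ε' → ε = ε'
  hq1 : ∀ ε, mE ε → ⟪vv β ε, vv β ε⟫ ≤ 1

variable {β : Fin 8 → V} {P R : Set V}

lemma Ctx.memP (hc : Ctx β P R) {ε : Fin 8 → ℝ} (hε : mE ε) : vv β ε ∈ P := by
  rw [hc.hPdef]; exact ⟨ε, hε.1, hε.2, rfl⟩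

lemma Ctx.repP (hc : Ctx β P R) {w : V} (hw : w ∈ P) : ∃ ε, mE ε ∧ w = vv β ε := by
  rw [hc.hPdef] at hw
  rcases hw with ⟨ε, h1, h2, h3⟩
  exact ⟨ε, ⟨h1, h2⟩, h3⟩

lemma Ctx.memR (hc : Ctx β P R) {ε : Fin 8 → ℝ} (hε : mE ε) : vv β ε ∈ R :=
  hc.hPR (hc.memP hε)

lemma Ctx.vne0 (hc : Ctx β P R) {ε : Fin 8 → ℝ} (hε : mE ε) : vv β ε ≠ 0 := by
  intro h
  exact hc.hR.2.1 (h ▸ hc.memR hε)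

lemma Ctx.intR (hc : Ctx β P R) {w w' : V} (hw : w ∈ R) (hw' : w' ∈ R) :
    ∃ n : ℤ, 2 * ⟪w, w'⟫ / ⟪w, w⟫ = (n : ℝ) :=
  hc.hR.2.2.2.1 w hw w' hw'

lemma Ctx.lemB (hc : Ctx β P R) {ε0 : Fin 8 → ℝ} (hε0 : mE ε0)
    (h1 : ⟪vv β ε0, vv β ε0⟫ = 1) (m : Fin 8) : ⟪vv β ε0, β m⟫ = ε0 m / 8 := by
  classical
  set d : Fin 8 → ℝ := fun m => ε0 m * ⟪vv β ε0, β m⟫ with hd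
  have hsum : ∑ m, d m = 1 := by
    rw [← h1]
    rw [inner_vv_right β (vv β ε0) ε0]
  have hpair : ∀ i j, i ≠ j → 1/4 ≤ d i + d j := by
    intro i j hij
    have hε' : mE (flip2 i j ε0) := hε0.flip2 hij
    have hc' : ⟪vv β ε0, vv β (flip2 i j ε0)⟫ = 1 - 2*(d i) - 2*(d j) := by
      rw [inner_vv_right β (vv β ε0) (flip2 i j ε0), sum_flip2_mul hij]
      have : (∑ m, ε0 m * ⟪vv β ε0, β m⟫) = 1 := hsum
      rw [this]
    obtain ⟨n, hn⟩ := hc.intR (hc.memR hε0) (hc.memR hε')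
    rw [h1] at hn
    have hval : ⟪vv β ε0, vv β (flip2 i j ε0)⟫ = (n : ℝ)/2 := by
      field_simp at hn; linarith
    have hcs := real_inner_mul_inner_self_le (vv β ε0) (vv β (flip2 i j ε0))
    rw [h1] at hcs
    have hq' := hc.hq1 _ hε'
    have hn1 : (n : ℝ) ≤ 1 := by
      by_contra hgt
      push_neg at hgt
      have hn2 : (2 : ℝ) ≤ (n : ℝ) := by
        have : (1 : ℤ) < n := by exact_mod_cast hgt
        exact_mod_cast this
      have hval1 : 1 ≤ ⟪vv β ε0, vv β (flip2 i j ε0)⟫ := by rw [hval]; linarith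
      have hle1 : ⟪vv β ε0, vv β (flip2 i j ε0)⟫ ≤ 1 := by nlinarith
      have heq1 : ⟪vv β ε0, vv β (flip2 i j ε0)⟫ = 1 := le_antisymm hle1 hval1
      have hq'1 : ⟪vv β (flip2 i j ε0), vv β (flip2 i j ε0)⟫ = 1 := by nlinarith
      have := hc.hinj ε0 (flip2 i j ε0) hε0 hε' (eq_of_inner h1 hq'1 heq1)
      have hi := congrFun this i
      rw [flip2_left] at hi
      exact sg_ne hε0.1 i (by linarith)
    have : ⟪vv β ε0, vv β (flip2 i j ε0)⟫ ≤ 1/2 := by rw [hval]; linarith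
    linarith [hc', this]
  have hlow : ∀ i, 1/8 ≤ d i := by
    intro i
    have hdec : ∑ m, d m = d i + ∑ m ∈ Finset.univ.erase i, d m :=
      (Finset.add_sum_erase _ d (Finset.mem_univ i)).symm
    have hbound : ∀ m ∈ Finset.univ.erase i, 1/4 - d i ≤ d m := by
      intro m hm
      have hne : m ≠ i := (Finset.mem_erase.1 hm).1
      have := hpair m i hne
      linarith
    have hsumlow : (7 : ℝ) * (1/4 - d i) ≤ ∑ m ∈ Finset.univ.erase i, d m := by
      have := Finset.sum_le_sum hbound
      have hcard : (Finset.univ.erase i).card = 7 := by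
        rw [Finset.card_erase_of_mem (Finset.mem_univ i)]
        simp
      rw [Finset.sum_const, hcard] at this
      simpa [nsmul_eq_mul] using this
    rw [hsum] at hdec
    linarith
  have hall : d m = 1/8 := by
    have hz : ∑ m, (d m - 1/8) = 0 := by
      rw [Finset.sum_sub_distrib, hsum]
      simp
    have hnn : ∀ m ∈ Finset.univ, (0:ℝ) ≤ d m - 1/8 := fun m _ => by linarith [hlow m]
    have := (Finset.sum_eq_zero_iff_of_nonneg hnn).1 hz m (Finset.mem_univ m)
    linarith
  have : ε0 m * d m = ε0 m * (1/8) := by rw [hall]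
  rw [hd] at this
  simp only [] at this
  rw [← mul_assoc, sg_sq hε0.1 m, one_mul] at this
  rw [this]; ring

lemma Ctx.innerMax (hc : Ctx β P R) {ε0 : Fin 8 → ℝ} (hε0 : mE ε0)
    (h1 : ⟪vv β ε0, vv β ε0⟫ = 1) (ζ : Fin 8 → ℝ) :
    ⟪vv β ε0, vv β ζ⟫ = (∑ m, ε0 m * ζ m) / 8 := by
  rw [inner_vv_right]
  rw [Finset.sum_congr rfl (fun m _ => by rw [hc.lemB hε0 h1 m])]
  rw [Finset.sum_div]
  exact Finset.sum_congr rfl (fun m _ => by ring)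

lemma neg_mem_clos {P : Set V} {x : V} (hx : ReflClosure P x) (hxx : ⟪x,x⟫ ≠ 0) :
    ReflClosure P (-x) := by
  have h := ReflClosure.refl x x hx hx
  have hco : 2*⟪x,x⟫/⟪x,x⟫ = 2 := by field_simp
  have heq : x - (2*⟪x,x⟫/⟪x,x⟫) • x = -x := by rw [hco]; module
  rwa [heq] at h

lemma sub_mem_clos {P : Set V} {a b : V} (ha : ReflClosure P a) (hb : ReflClosure P b)
    (hco : 2*⟪a,b⟫/⟪a,a⟫ = 1) : ReflClosure P (b - a) := by
  have h := ReflClosure.refl a b ha hb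
  have heq : b - (2*⟪a,b⟫/⟪a,a⟫) • a = b - a := by rw [hco]; module
  rwa [heq] at h

lemma Ctx.reflQ (hc : Ctx β P R) {x p : V} (hx : ReflClosure P x) (hxP : x ∉ P)
    (hxx : ⟪x,x⟫ ≠ 0) (hp : p ∈ P) : p - (2*⟪x,p⟫/⟪x,x⟫) • x ∈ P := by
  by_contra hyP
  have hy : ReflClosure P (p - (2*⟪x,p⟫/⟪x,x⟫) • x) :=
    ReflClosure.refl x p hx (ReflClosure.base p hp)
  have hxQ : x ∈ ({v | ReflClosure P v} \ P) := ⟨hx, hxP⟩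
  have hyQ : (p - (2*⟪x,p⟫/⟪x,x⟫) • x) ∈ ({v | ReflClosure P v} \ P) := ⟨hy, hyP⟩
  have hmem := hc.hQ.2.2.2.2 x hxQ _ hyQ
  have hxy : ⟪x, p - (2*⟪x,p⟫/⟪x,x⟫) • x⟫ = -⟪x,p⟫ := by
    rw [inner_sub_right, real_inner_smul_right]
    field_simp
    ring
  have hback : (p - (2*⟪x,p⟫/⟪x,x⟫) • x)
      - (2*⟪x, p - (2*⟪x,p⟫/⟪x,x⟫) • x⟫/⟪x,x⟫) • x = p := by
    rw [hxy]
    have : 2*(-⟪x,p⟫)/⟪x,x⟫ = -(2*⟪x,p⟫/⟪x,x⟫) := by ring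
    rw [this]
    module
  rw [hback] at hmem
  exact hmem.2 hp

lemma Ctx.halfInner (hc : Ctx β P R) {ε0 : Fin 8 → ℝ} (hε0 : mE ε0)
    (h1 : ⟪vv β ε0, vv β ε0⟫ = 1) {i j : Fin 8} (hij : i ≠ j) :
    ⟪vv β ε0, vv β (flip2 i j ε0)⟫ = 1/2 := by
  rw [hc.innerMax hε0 h1]
  have : ∑ m, ε0 m * flip2 i j ε0 m = ∑ m, flip2 i j ε0 m * ε0 m :=
    Finset.sum_congr rfl (fun m _ => mul_comm _ _)
  rw [this, sum_flip2_mul hij, sum_self hε0.1, sg_sq hε0.1 i, sg_sq hε0.1 j]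
  norm_num

lemma Ctx.rho_mem (hc : Ctx β P R) {ε0 : Fin 8 → ℝ} (hε0 : mE ε0)
    (h1 : ⟪vv β ε0, vv β ε0⟫ = 1) {i j : Fin 8} (hij : i ≠ j) :
    ⟪vv β (flip2 i j ε0), vv β (flip2 i j ε0)⟫ = 1
    ∨ ⟪vv β (flip2 i j ε0), vv β (flip2 i j ε0)⟫ = 1/2
    ∨ ⟪vv β (flip2 i j ε0), vv β (flip2 i j ε0)⟫ = 1/3
    ∨ ⟪vv β (flip2 i j ε0), vv β (flip2 i j ε0)⟫ = 1/4 := by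
  have hη : mE (flip2 i j ε0) := hε0.flip2 hij
  have hhalf := hc.halfInner hε0 h1 hij
  set ρ := ⟪vv β (flip2 i j ε0), vv β (flip2 i j ε0)⟫ with hρ
  have hsymm : ⟪vv β (flip2 i j ε0), vv β ε0⟫ = 1/2 := by
    rw [real_inner_comm]; exact hhalf
  obtain ⟨n, hn⟩ := hc.intR (hc.memR hη) (hc.memR hε0)
  rw [hsymm, ← hρ] at hn
  have hcs := real_inner_mul_inner_self_le (vv β ε0) (vv β (flip2 i j ε0))
  rw [h1, hhalf, ← hρ] at hcs
  have hρ4 : 1/4 ≤ ρ := by linarith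
  have hρ1 : ρ ≤ 1 := hc.hq1 _ hη
  have hρpos : 0 < ρ := by linarith
  have hnval : (n:ℝ) = 1/ρ := by field_simp at hn ⊢; linarith
  have hn1 : 1 ≤ n := by
    have : (1:ℝ) ≤ (n:ℝ) := by rw [hnval]; rw [le_div_iff₀ hρpos]; linarith
    exact_mod_cast this
  have hn4 : n ≤ 4 := by
    have : (n:ℝ) ≤ 4 := by rw [hnval]; rw [div_le_iff₀ hρpos]; linarith
    exact_mod_cast this
  have hρval : ρ = 1/(n:ℝ) := by
    have hnne : (n:ℝ) ≠ 0 := by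
      have : (0:ℤ) < n := by omega
      have : (0:ℝ) < (n:ℝ) := by exact_mod_cast this
      linarith
    field_simp at hnval ⊢
    linarith [hnval]
  interval_cases n
  · left; rw [hρval]; norm_num
  · right; left; rw [hρval]; norm_num
  · right; right; left; rw [hρval]; norm_num
  · right; right; right; rw [hρval]; norm_num

lemma sum_comm_mul (f g : Fin 8 → ℝ) : ∑ m, f m * g m = ∑ m, g m * f m :=
  Finset.sum_congr rfl (fun m _ => mul_comm _ _)

lemma pm_neg2 {a b : ℝ} (ha : a = 1 ∨ a = -1) (hb : b = 1 ∨ b = -1) (h : a + b = -2) :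
    a = -1 ∧ b = -1 := by
  rcases ha with h1 | h1 <;> rcases hb with h2 | h2 <;> constructor <;> linarith

lemma sg_mul_pm {ε ζ : Fin 8 → ℝ} (hε : Sg ε) (hζ : Sg ζ) (m : Fin 8) :
    ε m * ζ m = 1 ∨ ε m * ζ m = -1 := by
  rcases hε m with h1 | h1 <;> rcases hζ m with h2 | h2 <;> rw [h1, h2] <;> norm_num

lemma sg_of_mul_neg {ε ζ : Fin 8 → ℝ} (hε : Sg ε) (hζ : Sg ζ) {m : Fin 8}
    (h : ε m * ζ m = -1) : ζ m = -ε m := by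
  rcases hε m with h1 | h1 <;> rcases hζ m with h2 | h2 <;> rw [h1, h2] at h ⊢ <;> norm_num at *

lemma sg_of_mul_one {ε ζ : Fin 8 → ℝ} (hε : Sg ε) (hζ : Sg ζ) {m : Fin 8}
    (h : ε m * ζ m = 1) : ζ m = ε m := by
  rcases hε m with h1 | h1 <;> rcases hζ m with h2 | h2 <;> rw [h1, h2] at h ⊢ <;> norm_num at *

lemma Ctx.L14 (hc : Ctx β P R) {ε0 : Fin 8 → ℝ} (hε0 : mE ε0)
    (h1 : ⟪vv β ε0, vv β ε0⟫ = 1) {i j : Fin 8} (hij : i ≠ j)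
    (hρ : ⟪vv β (flip2 i j ε0), vv β (flip2 i j ε0)⟫ = 1/4) : False := by
  have hη : mE (flip2 i j ε0) := hε0.flip2 hij
  have hhalf := hc.halfInner hε0 h1 hij
  have hsymm : ⟪vv β (flip2 i j ε0), vv β ε0⟫ = 1/2 := by rw [real_inner_comm]; exact hhalf
  have h0 : ⟪vv β ε0 - (2:ℝ) • vv β (flip2 i j ε0),
      vv β ε0 - (2:ℝ) • vv β (flip2 i j ε0)⟫ = 0 := by
    simp only [inner_sub_left, inner_sub_right, real_inner_smul_left, real_inner_smul_right]
    rw [h1, hρ, hhalf, hsymm]; ring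
  have heq : vv β ε0 = (2:ℝ) • vv β (flip2 i j ε0) :=
    sub_eq_zero.1 (inner_self_eq_zero.1 h0)
  rcases hc.hR.2.2.1 (vv β (flip2 i j ε0)) (hc.memR hη) 2
    (by rw [← heq]; exact hc.memR hε0) with h | h <;> norm_num at h

lemma Ctx.twoFlipRep (hc : Ctx β P R) {ε0 : Fin 8 → ℝ} (hε0 : mE ε0)
    (h1 : ⟪vv β ε0, vv β ε0⟫ = 1) {x : V} (hxP : x ∈ P)
    (hxv : ⟪vv β ε0, x⟫ = 1/2) : ∃ a b, a ≠ b ∧ x = vv β (flip2 a b ε0) := by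
  classical
  obtain ⟨ξ, hξ, rfl⟩ := hc.repP hxP
  have hsum : ∑ m, ε0 m * ξ m = 4 := by
    have := hc.innerMax hε0 h1 ξ
    rw [hxv] at this
    linarith
  have hcard : (Finset.univ.filter (fun m => ε0 m * ξ m = -1)).card = 2 := by
    apply filter_card_of_sum _ _ (fun m _ => sg_mul_pm hε0.1 hξ.1 m)
    rw [hsum]
    norm_num
  obtain ⟨a, b, hab, hset⟩ := Finset.card_eq_two.1 hcard
  refine ⟨a, b, hab, ?_⟩
  have hmem : ∀ m : Fin 8, ε0 m * ξ m = -1 ↔ (m = a ∨ m = b) := by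
    intro m
    constructor
    · intro h
      have : m ∈ Finset.univ.filter (fun m => ε0 m * ξ m = -1) := by
        simp [h]
      rw [hset] at this
      simpa using this
    · intro h
      have : m ∈ ({a, b} : Finset (Fin 8)) := by simpa using h
      rw [← hset] at this
      exact (Finset.mem_filter.1 this).2
  congr 1
  funext m
  by_cases hm : m = a ∨ m = b
  · have hneg := (hmem m).2 hm
    rw [sg_of_mul_neg hε0.1 hξ.1 hneg]
    rcases hm with h | h <;> subst h
    · rw [flip2_left]
    · rw [flip2_right]
  · push_neg at hm
    have : ε0 m * ξ m = 1 := by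
      rcases sg_mul_pm hε0.1 hξ.1 m with h | h
      · exact h
      · exact absurd ((hmem m).1 h) (by push_neg; exact hm)
    rw [sg_of_mul_one hε0.1 hξ.1 this, flip2_other hm.1 hm.2]

lemma Ctx.disjointKill (hc : Ctx β P R) {ε0 : Fin 8 → ℝ} (hε0 : mE ε0)
    {p q a c : Fin 8} (hpq : p ≠ q) (hac : a ≠ c)
    (hap : a ≠ p) (haq : a ≠ q) (hcp : c ≠ p) (hcq : c ≠ q)
    (hrep : vv β ε0 - vv β (flip2 p q ε0) = vv β (flip2 a c ε0)) : False := by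
  have hη : mE (flip2 p q ε0) := hε0.flip2 hpq
  have hν : mE (flip2 a c (flip2 p q ε0)) := hη.flip2 hac
  have hv0 : vv β (flip2 a c (flip2 p q ε0)) = 0 := by
    have e1 := vv_flip2 β hac (flip2 p q ε0)
    rw [flip2_other hap haq, flip2_other hcp hcq] at e1
    have e2 := vv_flip2 β hac ε0
    rw [e2] at hrep
    rw [e1]
    linear_combination (norm := module) -hrep
  exact hc.vne0 hν hv0

lemma Ctx.auxW (hc : Ctx β P R) {ε0 : Fin 8 → ℝ} (hε0 : mE ε0)
    (h1 : ⟪vv β ε0, vv β ε0⟫ = 1) {i j : Fin 8} (hij : i ≠ j)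
    (hρ : ⟪vv β (flip2 i j ε0), vv β (flip2 i j ε0)⟫ = 1/2)
    (hw : (2:ℝ) • vv β (flip2 i j ε0) - vv β ε0 ∈ P) : False := by
  classical
  have hη : mE (flip2 i j ε0) := hε0.flip2 hij
  have hhalf := hc.halfInner hε0 h1 hij
  have hsymm : ⟪vv β (flip2 i j ε0), vv β ε0⟫ = 1/2 := by rw [real_inner_comm]; exact hhalf
  have hsum0η : ∑ m, ε0 m * flip2 i j ε0 m = 4 := by
    have h := hc.innerMax hε0 h1 (flip2 i j ε0)
    rw [hhalf] at h
    linarith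
  obtain ⟨ζ, hζ, hwv⟩ := hc.repP hw
  have hζ1 : ⟪vv β ζ, vv β ζ⟫ = 1 := by
    rw [← hwv]
    simp only [inner_sub_left, inner_sub_right, real_inner_smul_left, real_inner_smul_right]
    rw [h1, hρ, hhalf, hsymm]; ring
  have hζv0 : ∑ m, ζ m * ε0 m = 0 := by
    have h := hc.innerMax hζ hζ1 ε0
    rw [← hwv] at h
    simp only [inner_sub_left, real_inner_smul_left] at h
    rw [hsymm, h1] at h
    linarith [h]
  have S0 : ∑ m, ε0 m * ζ m = 0 := by rw [sum_comm_mul]; exact hζv0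
  have hζu : ∑ m, ζ m * flip2 i j ε0 m = 4 := by
    have h := hc.innerMax hζ hζ1 (flip2 i j ε0)
    rw [← hwv] at h
    simp only [inner_sub_left, real_inner_smul_left] at h
    rw [hρ, hhalf] at h
    linarith [h]
  have hkey : ε0 i * ζ i + ε0 j * ζ j = -2 := by
    have h := sum_flip2_mul hij ε0 ζ
    rw [S0] at h
    rw [sum_comm_mul ζ (flip2 i j ε0)] at hζu
    rw [hζu] at h
    linarith
  obtain ⟨hζi, hζj⟩ := pm_neg2 (sg_mul_pm hε0.1 hζ.1 i) (sg_mul_pm hε0.1 hζ.1 j) hkey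
  have hrest : ∑ m ∈ (Finset.univ.erase i).erase j, ε0 m * ζ m = 2 := by
    have h : (∑ m, ε0 m * ζ m)
        = ε0 i * ζ i + ε0 j * ζ j + ∑ m ∈ (Finset.univ.erase i).erase j, ε0 m * ζ m :=
      decomp_sum (fun m => ε0 m * ζ m) hij
    rw [S0, hζi, hζj] at h
    linarith
  have hcard6 : ((Finset.univ.erase i).erase j).card = 6 := by
    rw [Finset.card_erase_of_mem, Finset.card_erase_of_mem (Finset.mem_univ i)]
    · simp
    · exact Finset.mem_erase.2 ⟨Ne.symm hij, Finset.mem_univ j⟩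
  have hfil : (((Finset.univ.erase i).erase j).filter (fun m => ε0 m * ζ m = -1)).card = 2 := by
    apply filter_card_of_sum _ _ (fun m _ => sg_mul_pm hε0.1 hζ.1 m)
    rw [hrest, hcard6]
    norm_num
  obtain ⟨k, l, hkl, hsetkl⟩ := Finset.card_eq_two.1 hfil
  have hkmem : k ∈ ((Finset.univ.erase i).erase j).filter (fun m => ε0 m * ζ m = -1) := by
    rw [hsetkl]; simp
  have hlmem : l ∈ ((Finset.univ.erase i).erase j).filter (fun m => ε0 m * ζ m = -1) := by
    rw [hsetkl]; simp
  have hkζ : ε0 k * ζ k = -1 := (Finset.mem_filter.1 hkmem).2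
  have hlζ : ε0 l * ζ l = -1 := (Finset.mem_filter.1 hlmem).2
  have hkj : k ≠ j := (Finset.mem_erase.1 (Finset.mem_filter.1 hkmem).1).1
  have hki : k ≠ i := (Finset.mem_erase.1 (Finset.mem_erase.1 (Finset.mem_filter.1 hkmem).1).2).1
  have hlj : l ≠ j := (Finset.mem_erase.1 (Finset.mem_filter.1 hlmem).1).1
  have hli : l ≠ i := (Finset.mem_erase.1 (Finset.mem_erase.1 (Finset.mem_filter.1 hlmem).1).2).1
  have hε' : mE (flip2 k l ε0) := hε0.flip2 hkl
  have hζε' : ⟪vv β ζ, vv β (flip2 k l ε0)⟫ = 1/2 := by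
    rw [hc.innerMax hζ hζ1 (flip2 k l ε0)]
    rw [sum_comm_mul ζ (flip2 k l ε0), sum_flip2_mul hkl ε0 ζ, S0, hkζ, hlζ]
    norm_num
  have hhalfkl := hc.halfInner hε0 h1 hkl
  have huε' : ⟪vv β (flip2 i j ε0), vv β (flip2 k l ε0)⟫ = 1/2 := by
    have h : ⟪(2:ℝ) • vv β (flip2 i j ε0) - vv β ε0, vv β (flip2 k l ε0)⟫ = 1/2 := by
      rw [hwv]; exact hζε'
    simp only [inner_sub_left, real_inner_smul_left] at h
    rw [hhalfkl] at h
    linarith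
  have hsum0ε' : ∑ m, ε0 m * flip2 k l ε0 m = 4 := by
    have h := hc.innerMax hε0 h1 (flip2 k l ε0)
    rw [hhalfkl] at h
    linarith
  rcases hc.rho_mem hε0 h1 hkl with hρ' | hρ' | hρ' | hρ'
  · -- ε' maximal
    have h := hc.innerMax hε' hρ' (flip2 i j ε0)
    have hsum : ∑ m, flip2 k l ε0 m * flip2 i j ε0 m = 0 := by
      rw [sum_flip2_mul hkl ε0 (flip2 i j ε0), hsum0η,
        flip2_other hki hkj, flip2_other hli hlj, sg_sq hε0.1 k, sg_sq hε0.1 l]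
      ring
    rw [hsum] at h
    rw [real_inner_comm] at h
    rw [huε'] at h
    norm_num at h
  · have heq : vv β (flip2 i j ε0) = vv β (flip2 k l ε0) := eq_of_inner hρ hρ' huε'
    have := congrFun (hc.hinj _ _ hη hε' heq) i
    rw [flip2_left, flip2_other (Ne.symm hki) (Ne.symm hli)] at this
    exact sg_ne hε0.1 i (by linarith)
  · have hcs := real_inner_mul_inner_self_le (vv β (flip2 i j ε0)) (vv β (flip2 k l ε0))
    rw [huε', hρ, hρ'] at hcs
    norm_num at hcs
  · have hcs := real_inner_mul_inner_self_le (vv β (flip2 i j ε0)) (vv β (flip2 k l ε0))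
    rw [huε', hρ, hρ'] at hcs
    norm_num at hcs

lemma Ctx.auxW3 (hc : Ctx β P R) {ε0 : Fin 8 → ℝ} (hε0 : mE ε0)
    (h1 : ⟪vv β ε0, vv β ε0⟫ = 1) {i j : Fin 8} (hij : i ≠ j)
    (hρ : ⟪vv β (flip2 i j ε0), vv β (flip2 i j ε0)⟫ = 1/3)
    (hw : (3:ℝ) • vv β (flip2 i j ε0) - (2:ℝ) • vv β ε0 ∈ P) : False := by
  classical
  have hη : mE (flip2 i j ε0) := hε0.flip2 hij
  have hhalf := hc.halfInner hε0 h1 hij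
  have hsymm : ⟪vv β (flip2 i j ε0), vv β ε0⟫ = 1/2 := by rw [real_inner_comm]; exact hhalf
  have hsum0η : ∑ m, ε0 m * flip2 i j ε0 m = 4 := by
    have h := hc.innerMax hε0 h1 (flip2 i j ε0)
    rw [hhalf] at h
    linarith
  obtain ⟨ζ, hζ, hwv⟩ := hc.repP hw
  have hζ1 : ⟪vv β ζ, vv β ζ⟫ = 1 := by
    rw [← hwv]
    simp only [inner_sub_left, inner_sub_right, real_inner_smul_left, real_inner_smul_right]
    rw [h1, hρ, hhalf, hsymm]; ring
  have hζv0 : ∑ m, ζ m * ε0 m = -4 := by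
    have h := hc.innerMax hζ hζ1 ε0
    rw [← hwv] at h
    simp only [inner_sub_left, real_inner_smul_left] at h
    rw [hsymm, h1] at h
    linarith [h]
  have S0 : ∑ m, ε0 m * ζ m = -4 := by rw [sum_comm_mul]; exact hζv0
  have hζu : ∑ m, ζ m * flip2 i j ε0 m = 0 := by
    have h := hc.innerMax hζ hζ1 (flip2 i j ε0)
    rw [← hwv] at h
    simp only [inner_sub_left, real_inner_smul_left] at h
    rw [hρ, hhalf] at h
    linarith [h]
  have hkey : ε0 i * ζ i + ε0 j * ζ j = -2 := by
    have h := sum_flip2_mul hij ε0 ζ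
    rw [S0] at h
    rw [sum_comm_mul ζ (flip2 i j ε0)] at hζu
    rw [hζu] at h
    linarith
  obtain ⟨hζi, hζj⟩ := pm_neg2 (sg_mul_pm hε0.1 hζ.1 i) (sg_mul_pm hε0.1 hζ.1 j) hkey
  have hrest : ∑ m ∈ (Finset.univ.erase i).erase j, ε0 m * ζ m = -2 := by
    have h : (∑ m, ε0 m * ζ m)
        = ε0 i * ζ i + ε0 j * ζ j + ∑ m ∈ (Finset.univ.erase i).erase j, ε0 m * ζ m :=
      decomp_sum (fun m => ε0 m * ζ m) hij
    rw [S0, hζi, hζj] at h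
    linarith
  have hcard6 : ((Finset.univ.erase i).erase j).card = 6 := by
    rw [Finset.card_erase_of_mem, Finset.card_erase_of_mem (Finset.mem_univ i)]
    · simp
    · exact Finset.mem_erase.2 ⟨Ne.symm hij, Finset.mem_univ j⟩
  have hfil : (((Finset.univ.erase i).erase j).filter (fun m => ε0 m * ζ m = -1)).card = 4 := by
    apply filter_card_of_sum _ _ (fun m _ => sg_mul_pm hε0.1 hζ.1 m)
    rw [hrest, hcard6]
    norm_num
  have h12 : 1 < (((Finset.univ.erase i).erase j).filter (fun m => ε0 m * ζ m = -1)).card := by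
    rw [hfil]; norm_num
  obtain ⟨k, hkmem, l, hlmem, hkl⟩ := Finset.one_lt_card.1 h12
  have hkζ : ε0 k * ζ k = -1 := (Finset.mem_filter.1 hkmem).2
  have hlζ : ε0 l * ζ l = -1 := (Finset.mem_filter.1 hlmem).2
  have hkj : k ≠ j := (Finset.mem_erase.1 (Finset.mem_filter.1 hkmem).1).1
  have hki : k ≠ i := (Finset.mem_erase.1 (Finset.mem_erase.1 (Finset.mem_filter.1 hkmem).1).2).1
  have hlj : l ≠ j := (Finset.mem_erase.1 (Finset.mem_filter.1 hlmem).1).1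
  have hli : l ≠ i := (Finset.mem_erase.1 (Finset.mem_erase.1 (Finset.mem_filter.1 hlmem).1).2).1
  have hε' : mE (flip2 k l ε0) := hε0.flip2 hkl
  have hζε' : ⟪vv β ζ, vv β (flip2 k l ε0)⟫ = 0 := by
    rw [hc.innerMax hζ hζ1 (flip2 k l ε0)]
    rw [sum_comm_mul ζ (flip2 k l ε0), sum_flip2_mul hkl ε0 ζ, S0, hkζ, hlζ]
    norm_num
  have hhalfkl := hc.halfInner hε0 h1 hkl
  have huε' : ⟪vv β (flip2 i j ε0), vv β (flip2 k l ε0)⟫ = 1/3 := by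
    have h : ⟪(3:ℝ) • vv β (flip2 i j ε0) - (2:ℝ) • vv β ε0, vv β (flip2 k l ε0)⟫ = 0 := by
      rw [hwv]; exact hζε'
    simp only [inner_sub_left, real_inner_smul_left] at h
    rw [hhalfkl] at h
    linarith
  rcases hc.rho_mem hε0 h1 hkl with hρ' | hρ' | hρ' | hρ'
  · have h := hc.innerMax hε' hρ' (flip2 i j ε0)
    have hsum : ∑ m, flip2 k l ε0 m * flip2 i j ε0 m = 0 := by
      rw [sum_flip2_mul hkl ε0 (flip2 i j ε0), hsum0η,
        flip2_other hki hkj, flip2_other hli hlj, sg_sq hε0.1 k, sg_sq hε0.1 l]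
      ring
    rw [hsum] at h
    rw [real_inner_comm] at h
    rw [huε'] at h
    norm_num at h
  · obtain ⟨n, hn⟩ := hc.intR (hc.memR hε') (hc.memR hη)
    rw [real_inner_comm, huε', hρ'] at hn
    have h3 : (3:ℝ) * (n:ℝ) = 4 := by
      field_simp at hn
      linarith
    have h3' : (3:ℤ) * n = 4 := by exact_mod_cast h3
    omega
  · have heq : vv β (flip2 i j ε0) = vv β (flip2 k l ε0) := eq_of_inner hρ hρ' huε'
    have := congrFun (hc.hinj _ _ hη hε' heq) i
    rw [flip2_left, flip2_other (Ne.symm hki) (Ne.symm hli)] at this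
    exact sg_ne hε0.1 i (by linarith)
  · obtain ⟨n, hn⟩ := hc.intR (hc.memR hε') (hc.memR hη)
    rw [real_inner_comm, huε', hρ'] at hn
    have h3 : (3:ℝ) * (n:ℝ) = 8 := by
      field_simp at hn
      linarith
    have h3' : (3:ℤ) * n = 8 := by exact_mod_cast h3
    omega

lemma int_sq_lt_one {k : ℤ} (h : (k:ℝ)^2 < 1) : k = 0 := by
  have hk : k^2 < 1 := by exact_mod_cast h
  nlinarith [sq_nonneg (k-1), sq_nonneg (k+1)]

set_option maxHeartbeats 1000000 in
lemma Ctx.overlap13 (hc : Ctx β P R) {ε0 : Fin 8 → ℝ} (hε0 : mE ε0)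
    (h1 : ⟪vv β ε0, vv β ε0⟫ = 1) {i j b : Fin 8} (hij : i ≠ j) (hbi : b ≠ i) (hbj : b ≠ j)
    (hρ : ⟪vv β (flip2 i j ε0), vv β (flip2 i j ε0)⟫ = 1/3)
    (hx : vv β ε0 - vv β (flip2 i j ε0) = vv β (flip2 j b ε0)) : False := by
  have hjb : j ≠ b := Ne.symm hbj
  have hib : i ≠ b := Ne.symm hbi
  have hη : mE (flip2 i j ε0) := hε0.flip2 hij
  have hξ : mE (flip2 j b ε0) := hε0.flip2 hjb
  have hτ : mE (flip2 i b ε0) := hε0.flip2 hib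
  have hhalf := hc.halfInner hε0 h1 hij
  have hsymm : ⟪vv β (flip2 i j ε0), vv β ε0⟫ = 1/2 := by rw [real_inner_comm]; exact hhalf
  have hhalfτ := hc.halfInner hε0 h1 hib
  have hτv0 : ⟪vv β (flip2 i b ε0), vv β ε0⟫ = 1/2 := by rw [real_inner_comm]; exact hhalfτ
  have hτeq : vv β (flip2 i b ε0) = (4*ε0 j) • β j := by
    have e1 := vv_flip2 β hij ε0
    have e2 := vv_flip2 β hjb ε0
    have e3 := vv_flip2 β hib ε0
    rw [e1, e2] at hx
    rw [e3]
    linear_combination (norm := module) -hx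
  have hξq : ⟪vv β (flip2 j b ε0), vv β (flip2 j b ε0)⟫ = 1/3 := by
    rw [← hx]
    simp only [inner_sub_left, inner_sub_right]
    rw [h1, hρ, hhalf, hsymm]; ring
  have hAB : ⟪vv β (flip2 i b ε0), vv β (flip2 i j ε0)⟫
      + ⟪vv β (flip2 i b ε0), vv β (flip2 j b ε0)⟫ = 1/2 := by
    rw [← hx, inner_sub_right, hτv0]
    ring
  rcases hc.rho_mem hε0 h1 hib with hρτ | hρτ | hρτ | hρτ
  · -- τ maximal : contradiction 1 = 1/2
    have hβj : ⟪vv β (flip2 i b ε0), β j⟫ = ε0 j / 8 := by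
      have h := hc.lemB hτ hρτ j
      rwa [flip2_other (Ne.symm hij) hjb] at h
    have h2 : ⟪vv β (flip2 i b ε0), vv β (flip2 i b ε0)⟫ = 1/2 := by
      nth_rewrite 2 [hτeq]
      rw [real_inner_smul_right, hβj]
      have hsq := sg_sq hε0.1 j
      calc 4*ε0 j * (ε0 j/8) = (ε0 j * ε0 j)/2 := by ring
        _ = 1/2 := by rw [hsq]
    rw [hρτ] at h2
    norm_num at h2
  · -- q(τ) = 1/2 : A = B = 0, contradiction with A+B = 1/2
    have hA0 : ⟪vv β (flip2 i b ε0), vv β (flip2 i j ε0)⟫ = 0 := by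
      obtain ⟨n1, hn1⟩ := hc.intR (hc.memR hτ) (hc.memR hη)
      obtain ⟨n2, hn2⟩ := hc.intR (hc.memR hη) (hc.memR hτ)
      rw [hρτ] at hn1
      rw [real_inner_comm, hρ] at hn2
      have hcs := real_inner_mul_inner_self_le (vv β (flip2 i b ε0)) (vv β (flip2 i j ε0))
      rw [hρτ, hρ] at hcs
      have hk : ((n2 - n1 : ℤ):ℝ)^2 < 1 := by
        push_cast
        have e1 : (n1:ℝ) = 4*⟪vv β (flip2 i b ε0), vv β (flip2 i j ε0)⟫ := by
          field_simp at hn1; linarith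
        have e2 : (n2:ℝ) = 6*⟪vv β (flip2 i b ε0), vv β (flip2 i j ε0)⟫ := by
          field_simp at hn2; linarith
        rw [e1, e2]
        nlinarith [hcs]
      have := int_sq_lt_one hk
      have e1 : (n1:ℝ) = 4*⟪vv β (flip2 i b ε0), vv β (flip2 i j ε0)⟫ := by
        field_simp at hn1; linarith
      have e2 : (n2:ℝ) = 6*⟪vv β (flip2 i b ε0), vv β (flip2 i j ε0)⟫ := by
        field_simp at hn2; linarith
      have : (n2:ℝ) - (n1:ℝ) = 0 := by exact_mod_cast congrArg (Int.cast : ℤ → ℝ) this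
      linarith
    have hB0 : ⟪vv β (flip2 i b ε0), vv β (flip2 j b ε0)⟫ = 0 := by
      obtain ⟨n1, hn1⟩ := hc.intR (hc.memR hτ) (hc.memR hξ)
      obtain ⟨n2, hn2⟩ := hc.intR (hc.memR hξ) (hc.memR hτ)
      rw [hρτ] at hn1
      rw [real_inner_comm, hξq] at hn2
      have hcs := real_inner_mul_inner_self_le (vv β (flip2 i b ε0)) (vv β (flip2 j b ε0))
      rw [hρτ, hξq] at hcs
      have hk : ((n2 - n1 : ℤ):ℝ)^2 < 1 := by
        push_cast
        have e1 : (n1:ℝ) = 4*⟪vv β (flip2 i b ε0), vv β (flip2 j b ε0)⟫ := by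
          field_simp at hn1; linarith
        have e2 : (n2:ℝ) = 6*⟪vv β (flip2 i b ε0), vv β (flip2 j b ε0)⟫ := by
          field_simp at hn2; linarith
        rw [e1, e2]
        nlinarith [hcs]
      have := int_sq_lt_one hk
      have e1 : (n1:ℝ) = 4*⟪vv β (flip2 i b ε0), vv β (flip2 j b ε0)⟫ := by
        field_simp at hn1; linarith
      have e2 : (n2:ℝ) = 6*⟪vv β (flip2 i b ε0), vv β (flip2 j b ε0)⟫ := by
        field_simp at hn2; linarith
      have : (n2:ℝ) - (n1:ℝ) = 0 := by exact_mod_cast congrArg (Int.cast : ℤ → ℝ) this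
      linarith
    rw [hA0, hB0] at hAB
    norm_num at hAB
  · -- q(τ) = 1/3 : |A|,|B| ≤ 1/6
    obtain ⟨m0, hm0i, hm0j, hm0b⟩ := exists_out3 i j b
    have hA : ⟪vv β (flip2 i b ε0), vv β (flip2 i j ε0)⟫ ≤ 1/6
        ∧ -(1/6) ≤ ⟪vv β (flip2 i b ε0), vv β (flip2 i j ε0)⟫ := by
      obtain ⟨n, hn⟩ := hc.intR (hc.memR hτ) (hc.memR hη)
      rw [hρτ] at hn
      have en : (n:ℝ) = 6*⟪vv β (flip2 i b ε0), vv β (flip2 i j ε0)⟫ := by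
        field_simp at hn; linarith
      have hcs := real_inner_mul_inner_self_le (vv β (flip2 i b ε0)) (vv β (flip2 i j ε0))
      rw [hρτ, hρ] at hcs
      have hb1 : -2 ≤ n := by
        by_contra hlt
        push_neg at hlt
        have h3 : n ≤ -3 := by omega
        have : (n:ℝ) ≤ -3 := by exact_mod_cast h3
        nlinarith
      have hb2 : n ≤ 2 := by
        by_contra hlt
        push_neg at hlt
        have h3 : 3 ≤ n := by omega
        have : (3:ℝ) ≤ (n:ℝ) := by exact_mod_cast h3
        nlinarith
      interval_cases n
      · -- n = -2 : vτ = -u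
        exfalso
        have hval : ⟪vv β (flip2 i b ε0), vv β (flip2 i j ε0)⟫ = -(1/3) := by
          push_cast at en; linarith
        have heq : vv β (flip2 i b ε0) = vv β (fun m => -(flip2 i j ε0 m)) := by
          apply eq_of_inner hρτ
          · rw [vv_neg, inner_neg_neg]; exact hρ
          · rw [vv_neg, inner_neg_right, hval]; norm_num
        have := congrFun (hc.hinj _ _ hτ hη.neg heq) m0
        rw [flip2_other hm0i hm0b] at this
        have h2 : flip2 i j ε0 m0 = ε0 m0 := flip2_other hm0i hm0j ε0
        rw [h2] at this
        exact sg_ne hε0.1 m0 (by linarith)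
      · push_cast at en
        constructor <;> linarith
      · push_cast at en
        constructor <;> linarith
      · push_cast at en
        constructor <;> linarith
      · -- n = 2 : vτ = u
        exfalso
        have hval : ⟪vv β (flip2 i b ε0), vv β (flip2 i j ε0)⟫ = 1/3 := by push_cast at en; linarith
        have heq : vv β (flip2 i b ε0) = vv β (flip2 i j ε0) := eq_of_inner hρτ hρ hval
        have := congrFun (hc.hinj _ _ hτ hη heq) b
        rw [flip2_right, flip2_other hbi hbj] at this
        exact sg_ne hε0.1 b (by linarith)
    have hB : ⟪vv β (flip2 i b ε0), vv β (flip2 j b ε0)⟫ ≤ 1/6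
        ∧ -(1/6) ≤ ⟪vv β (flip2 i b ε0), vv β (flip2 j b ε0)⟫ := by
      obtain ⟨n, hn⟩ := hc.intR (hc.memR hτ) (hc.memR hξ)
      rw [hρτ] at hn
      have en : (n:ℝ) = 6*⟪vv β (flip2 i b ε0), vv β (flip2 j b ε0)⟫ := by
        field_simp at hn; linarith
      have hcs := real_inner_mul_inner_self_le (vv β (flip2 i b ε0)) (vv β (flip2 j b ε0))
      rw [hρτ, hξq] at hcs
      have hb1 : -2 ≤ n := by
        by_contra hlt
        push_neg at hlt
        have h3 : n ≤ -3 := by omega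
        have : (n:ℝ) ≤ -3 := by exact_mod_cast h3
        nlinarith
      have hb2 : n ≤ 2 := by
        by_contra hlt
        push_neg at hlt
        have h3 : 3 ≤ n := by omega
        have : (3:ℝ) ≤ (n:ℝ) := by exact_mod_cast h3
        nlinarith
      interval_cases n
      · exfalso
        have hval : ⟪vv β (flip2 i b ε0), vv β (flip2 j b ε0)⟫ = -(1/3) := by
          push_cast at en; linarith
        have heq : vv β (flip2 i b ε0) = vv β (fun m => -(flip2 j b ε0 m)) := by
          apply eq_of_inner hρτ
          · rw [vv_neg, inner_neg_neg]; exact hξq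
          · rw [vv_neg, inner_neg_right, hval]; norm_num
        have := congrFun (hc.hinj _ _ hτ hξ.neg heq) m0
        rw [flip2_other hm0i hm0b] at this
        have h2 : flip2 j b ε0 m0 = ε0 m0 := flip2_other hm0j hm0b ε0
        rw [h2] at this
        exact sg_ne hε0.1 m0 (by linarith)
      · push_cast at en
        constructor <;> linarith
      · push_cast at en
        constructor <;> linarith
      · push_cast at en
        constructor <;> linarith
      · exfalso
        have hval : ⟪vv β (flip2 i b ε0), vv β (flip2 j b ε0)⟫ = 1/3 := by
          push_cast at en; linarith
        have heq : vv β (flip2 i b ε0) = vv β (flip2 j b ε0) := eq_of_inner hρτ hξq hval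
        have := congrFun (hc.hinj _ _ hτ hξ heq) i
        rw [flip2_left, flip2_other hij hib] at this
        exact sg_ne hε0.1 i (by linarith)
    linarith [hA.1, hB.1, hAB]
  · exact hc.L14 hε0 h1 hib hρτ

lemma Ctx.L13 (hc : Ctx β P R) {ε0 : Fin 8 → ℝ} (hε0 : mE ε0)
    (h1 : ⟪vv β ε0, vv β ε0⟫ = 1) {i j : Fin 8} (hij : i ≠ j)
    (hρ : ⟪vv β (flip2 i j ε0), vv β (flip2 i j ε0)⟫ = 1/3) : False := by
  classical
  have hη : mE (flip2 i j ε0) := hε0.flip2 hij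
  have hhalf := hc.halfInner hε0 h1 hij
  have hsymm : ⟪vv β (flip2 i j ε0), vv β ε0⟫ = 1/2 := by rw [real_inner_comm]; exact hhalf
  have hxx : ⟪vv β ε0 - vv β (flip2 i j ε0), vv β ε0 - vv β (flip2 i j ε0)⟫ = 1/3 := by
    simp only [inner_sub_left, inner_sub_right]
    rw [h1, hρ, hhalf, hsymm]; ring
  have hxv0 : ⟪vv β ε0 - vv β (flip2 i j ε0), vv β ε0⟫ = 1/2 := by
    simp only [inner_sub_left]
    rw [h1, hsymm]; norm_num
  have hv0x : ⟪vv β ε0, vv β ε0 - vv β (flip2 i j ε0)⟫ = 1/2 := by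
    rw [real_inner_comm]; exact hxv0
  by_cases hxP : (vv β ε0 - vv β (flip2 i j ε0)) ∈ P
  · obtain ⟨a, c, hac, hrep⟩ := hc.twoFlipRep hε0 h1 hxP hv0x
    have hxu : ⟪vv β (flip2 i j ε0), vv β ε0 - vv β (flip2 i j ε0)⟫ = 1/6 := by
      simp only [inner_sub_right]
      rw [hρ, hsymm]; norm_num
    have hxueq : ∀ (h : vv β ε0 - vv β (flip2 i j ε0) = vv β (flip2 i j ε0)), False := by
      intro h
      rw [h, hρ] at hxu
      norm_num at hxu
    rcases eq_or_ne a i with hai | hai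
    · subst hai
      rcases eq_or_ne c j with hcj | hcj
      · subst hcj
        exact hxueq hrep
      · exact hc.overlap13 hε0 h1 (Ne.symm hij) hcj (Ne.symm hac)
          (by rw [flip2_comm j a]; exact hρ)
          (by rw [flip2_comm j a]; exact hrep)
    · rcases eq_or_ne a j with haj | haj
      · subst haj
        rcases eq_or_ne c i with hci | hci
        · subst hci
          rw [flip2_comm a c] at hrep
          exact hxueq hrep
        · exact hc.overlap13 hε0 h1 hij hci (Ne.symm hac) hρ hrep
      · rcases eq_or_ne c i with hci | hci
        · subst hci
          rw [flip2_comm a c] at hrep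
          exact hc.overlap13 hε0 h1 (Ne.symm hij) haj hai
            (by rw [flip2_comm j c]; exact hρ)
            (by rw [flip2_comm j c]; exact hrep)
        · rcases eq_or_ne c j with hcj | hcj
          · subst hcj
            rw [flip2_comm a c] at hrep
            exact hc.overlap13 hε0 h1 hij hai haj hρ hrep
          · exact hc.disjointKill hε0 hij hac hai haj hci hcj hrep
  · -- x ∉ P : reflect and use auxW3
    have hbase0 : ReflClosure P (vv β ε0) := ReflClosure.base _ (hc.memP hε0)
    have hbaseη : ReflClosure P (vv β (flip2 i j ε0)) := ReflClosure.base _ (hc.memP hη)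
    have hsub : ReflClosure P (vv β (flip2 i j ε0) - vv β ε0) :=
      sub_mem_clos hbase0 hbaseη (by rw [h1, hhalf]; norm_num)
    have hd : ⟪vv β (flip2 i j ε0) - vv β ε0, vv β (flip2 i j ε0) - vv β ε0⟫ = 1/3 := by
      simp only [inner_sub_left, inner_sub_right]
      rw [h1, hρ, hhalf, hsymm]; ring
    have hxclos : ReflClosure P (vv β ε0 - vv β (flip2 i j ε0)) := by
      have := neg_mem_clos hsub (by rw [hd]; norm_num)
      rwa [neg_sub] at this
    have hwP := hc.reflQ hxclos hxP (by rw [hxx]; norm_num) (hc.memP hε0)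
    have hco : 2*⟪vv β ε0 - vv β (flip2 i j ε0), vv β ε0⟫
        / ⟪vv β ε0 - vv β (flip2 i j ε0), vv β ε0 - vv β (flip2 i j ε0)⟫ = 3 := by
      rw [hxv0, hxx]; norm_num
    rw [hco] at hwP
    have hmod : vv β ε0 - (3:ℝ) • (vv β ε0 - vv β (flip2 i j ε0))
        = (3:ℝ) • vv β (flip2 i j ε0) - (2:ℝ) • vv β ε0 := by module
    rw [hmod] at hwP
    exact hc.auxW3 hε0 h1 hij hρ hwP

lemma Ctx.quarterKill (hc : Ctx β P R) {ε0 : Fin 8 → ℝ} (hε0 : mE ε0)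
    {p q t : Fin 8} (hpq : p ≠ q) (hqt : q ≠ t) (hpt : p ≠ t)
    (hG : ⟪β p, β p⟫ = 3/32)
    (hrep : vv β ε0 - vv β (flip2 p q ε0) = vv β (flip2 p t ε0)) : False := by
  have heq : vv β (flip2 q t ε0) = (4*ε0 p) • β p := by
    have e1 := vv_flip2 β hpq ε0
    have e2 := vv_flip2 β hpt ε0
    have e3 := vv_flip2 β hqt ε0
    rw [e1, e2] at hrep
    rw [e3]
    linear_combination (norm := module) -hrep
  have hq := hc.hq1 _ (hε0.flip2 hqt)
  rw [heq] at hq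
  simp only [real_inner_smul_left, real_inner_smul_right] at hq
  rw [hG] at hq
  rcases hε0.1 p with hp | hp <;> rw [hp] at hq <;> linarith

set_option maxHeartbeats 2000000 in
lemma Ctx.overlap12 (hc : Ctx β P R) {ε0 : Fin 8 → ℝ} (hε0 : mE ε0)
    (h1 : ⟪vv β ε0, vv β ε0⟫ = 1) {i j b : Fin 8} (hij : i ≠ j) (hbi : b ≠ i) (hbj : b ≠ j)
    (hρ : ⟪vv β (flip2 i j ε0), vv β (flip2 i j ε0)⟫ = 1/2)
    (hx : vv β ε0 - vv β (flip2 i j ε0) = vv β (flip2 j b ε0)) : False := by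
  classical
  have hjb : j ≠ b := Ne.symm hbj
  have hib : i ≠ b := Ne.symm hbi
  have hη : mE (flip2 i j ε0) := hε0.flip2 hij
  have hξ : mE (flip2 j b ε0) := hε0.flip2 hjb
  have hτ : mE (flip2 i b ε0) := hε0.flip2 hib
  have hhalf := hc.halfInner hε0 h1 hij
  have hsymm : ⟪vv β (flip2 i j ε0), vv β ε0⟫ = 1/2 := by rw [real_inner_comm]; exact hhalf
  have hhalfτ := hc.halfInner hε0 h1 hib
  have hτv0 : ⟪vv β (flip2 i b ε0), vv β ε0⟫ = 1/2 := by rw [real_inner_comm]; exact hhalfτ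
  have hτeq : vv β (flip2 i b ε0) = (4*ε0 j) • β j := by
    have e1 := vv_flip2 β hij ε0
    have e2 := vv_flip2 β hjb ε0
    have e3 := vv_flip2 β hib ε0
    rw [e1, e2] at hx
    rw [e3]
    linear_combination (norm := module) -hx
  have hξq : ⟪vv β (flip2 j b ε0), vv β (flip2 j b ε0)⟫ = 1/2 := by
    rw [← hx]
    simp only [inner_sub_left, inner_sub_right]
    rw [h1, hρ, hhalf, hsymm]; ring
  have hAB : ⟪vv β (flip2 i b ε0), vv β (flip2 i j ε0)⟫
      + ⟪vv β (flip2 i b ε0), vv β (flip2 j b ε0)⟫ = 1/2 := by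
    rw [← hx, inner_sub_right, hτv0]
    ring
  rcases hc.rho_mem hε0 h1 hib with hρτ | hρτ | hρτ | hρτ
  · -- τ maximal : contradiction 1 = 1/2
    have hβj : ⟪vv β (flip2 i b ε0), β j⟫ = ε0 j / 8 := by
      have h := hc.lemB hτ hρτ j
      rwa [flip2_other (Ne.symm hij) hjb] at h
    have h2 : ⟪vv β (flip2 i b ε0), vv β (flip2 i b ε0)⟫ = 1/2 := by
      nth_rewrite 2 [hτeq]
      rw [real_inner_smul_right, hβj]
      have hsq := sg_sq hε0.1 j
      calc 4*ε0 j * (ε0 j/8) = (ε0 j * ε0 j)/2 := by ring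
        _ = 1/2 := by rw [hsq]
    rw [hρτ] at h2
    norm_num at h2
  · -- q(τ) = 1/2 : main case
    obtain ⟨m0, hm0i, hm0j, hm0b⟩ := exists_out3 i j b
    -- A = 1/4
    have hA : ⟪vv β (flip2 i b ε0), vv β (flip2 i j ε0)⟫ = -(1/4)
        ∨ ⟪vv β (flip2 i b ε0), vv β (flip2 i j ε0)⟫ = 0
        ∨ ⟪vv β (flip2 i b ε0), vv β (flip2 i j ε0)⟫ = 1/4 := by
      obtain ⟨n, hn⟩ := hc.intR (hc.memR hτ) (hc.memR hη)
      rw [hρτ] at hn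
      have en : (n:ℝ) = 4*⟪vv β (flip2 i b ε0), vv β (flip2 i j ε0)⟫ := by
        field_simp at hn; linarith
      have hcs := real_inner_mul_inner_self_le (vv β (flip2 i b ε0)) (vv β (flip2 i j ε0))
      rw [hρτ, hρ] at hcs
      have hb1 : -2 ≤ n := by
        by_contra hlt
        push_neg at hlt
        have h3 : n ≤ -3 := by omega
        have : (n:ℝ) ≤ -3 := by exact_mod_cast h3
        nlinarith
      have hb2 : n ≤ 2 := by
        by_contra hlt
        push_neg at hlt
        have h3 : 3 ≤ n := by omega
        have : (3:ℝ) ≤ (n:ℝ) := by exact_mod_cast h3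
        nlinarith
      interval_cases n
      · exfalso
        have hval : ⟪vv β (flip2 i b ε0), vv β (flip2 i j ε0)⟫ = -(1/2) := by
          push_cast at en; linarith
        have heq : vv β (flip2 i b ε0) = vv β (fun m => -(flip2 i j ε0 m)) := by
          apply eq_of_inner hρτ
          · rw [vv_neg, inner_neg_neg]; exact hρ
          · rw [vv_neg, inner_neg_right, hval]; norm_num
        have := congrFun (hc.hinj _ _ hτ hη.neg heq) m0
        rw [flip2_other hm0i hm0b] at this
        have h2 : flip2 i j ε0 m0 = ε0 m0 := flip2_other hm0i hm0j ε0
        rw [h2] at this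
        exact sg_ne hε0.1 m0 (by linarith)
      · left; push_cast at en; linarith
      · right; left; push_cast at en; linarith
      · right; right; push_cast at en; linarith
      · exfalso
        have hval : ⟪vv β (flip2 i b ε0), vv β (flip2 i j ε0)⟫ = 1/2 := by
          push_cast at en; linarith
        have heq : vv β (flip2 i b ε0) = vv β (flip2 i j ε0) := eq_of_inner hρτ hρ hval
        have := congrFun (hc.hinj _ _ hτ hη heq) j
        rw [flip2_other (Ne.symm hij) hjb, flip2_right] at this
        exact sg_ne hε0.1 j (by linarith)
    have hB : ⟪vv β (flip2 i b ε0), vv β (flip2 j b ε0)⟫ = -(1/4)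
        ∨ ⟪vv β (flip2 i b ε0), vv β (flip2 j b ε0)⟫ = 0
        ∨ ⟪vv β (flip2 i b ε0), vv β (flip2 j b ε0)⟫ = 1/4 := by
      obtain ⟨n, hn⟩ := hc.intR (hc.memR hτ) (hc.memR hξ)
      rw [hρτ] at hn
      have en : (n:ℝ) = 4*⟪vv β (flip2 i b ε0), vv β (flip2 j b ε0)⟫ := by
        field_simp at hn; linarith
      have hcs := real_inner_mul_inner_self_le (vv β (flip2 i b ε0)) (vv β (flip2 j b ε0))
      rw [hρτ, hξq] at hcs
      have hb1 : -2 ≤ n := by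
        by_contra hlt
        push_neg at hlt
        have h3 : n ≤ -3 := by omega
        have : (n:ℝ) ≤ -3 := by exact_mod_cast h3
        nlinarith
      have hb2 : n ≤ 2 := by
        by_contra hlt
        push_neg at hlt
        have h3 : 3 ≤ n := by omega
        have : (3:ℝ) ≤ (n:ℝ) := by exact_mod_cast h3
        nlinarith
      interval_cases n
      · exfalso
        have hval : ⟪vv β (flip2 i b ε0), vv β (flip2 j b ε0)⟫ = -(1/2) := by
          push_cast at en; linarith
        have heq : vv β (flip2 i b ε0) = vv β (fun m => -(flip2 j b ε0 m)) := by
          apply eq_of_inner hρτ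
          · rw [vv_neg, inner_neg_neg]; exact hξq
          · rw [vv_neg, inner_neg_right, hval]; norm_num
        have := congrFun (hc.hinj _ _ hτ hξ.neg heq) m0
        rw [flip2_other hm0i hm0b] at this
        have h2 : flip2 j b ε0 m0 = ε0 m0 := flip2_other hm0j hm0b ε0
        rw [h2] at this
        exact sg_ne hε0.1 m0 (by linarith)
      · left; push_cast at en; linarith
      · right; left; push_cast at en; linarith
      · right; right; push_cast at en; linarith
      · exfalso
        have hval : ⟪vv β (flip2 i b ε0), vv β (flip2 j b ε0)⟫ = 1/2 := by
          push_cast at en; linarith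
        have heq : vv β (flip2 i b ε0) = vv β (flip2 j b ε0) := eq_of_inner hρτ hξq hval
        have := congrFun (hc.hinj _ _ hτ hξ heq) i
        rw [flip2_left, flip2_other hij hib] at this
        exact sg_ne hε0.1 i (by linarith)
    have hA14 : ⟪vv β (flip2 i b ε0), vv β (flip2 i j ε0)⟫ = 1/4 := by
      rcases hA with h | h | h <;> rcases hB with h' | h' | h' <;> linarith [hAB]
    have hB14 : ⟪vv β (flip2 i b ε0), vv β (flip2 j b ε0)⟫ = 1/4 := by
      rcases hA with h | h | h <;> rcases hB with h' | h' | h' <;> linarith [hAB]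
    -- Gram entries
    have hGjj : ⟪β j, β j⟫ = 1/32 := by
      have h := hρτ
      rw [hτeq] at h
      simp only [real_inner_smul_left, real_inner_smul_right] at h
      rcases hε0.1 j with hj | hj <;> rw [hj] at h <;> linarith
    have hu2 : vv β (flip2 i j ε0) = (2*ε0 j) • β j + (2*ε0 b) • β b := by
      have e2 := vv_flip2 β hjb ε0
      rw [e2] at hx
      linear_combination (norm := module) -hx
    have hx2 : vv β ε0 - vv β (flip2 i j ε0) = (2*ε0 i) • β i + (2*ε0 j) • β j := by
      have e1 := vv_flip2 β hij ε0
      rw [e1]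
      module
    have hGbb : ⟪β b, β b⟫ = 3/32 := by
      have h2 : ⟪β j, vv β (flip2 i j ε0)⟫ = ε0 j/16 := by
        have h := hA14
        rw [hτeq, real_inner_smul_left] at h
        rcases hε0.1 j with hj | hj <;> rw [hj] at h ⊢ <;> linarith
      have huu := hρ
      rw [hu2] at huu h2
      simp only [inner_add_left, inner_add_right, real_inner_smul_left,
        real_inner_smul_right] at huu h2
      rw [hGjj] at huu h2
      have hcomm := real_inner_comm (β b) (β j)
      rcases hε0.1 j with hj | hj <;> rcases hε0.1 b with hb | hb <;>
        rw [hj, hb] at huu h2 <;> linarith [huu, h2, hcomm]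
    have hGii : ⟪β i, β i⟫ = 3/32 := by
      have hxq : ⟪vv β ε0 - vv β (flip2 i j ε0), vv β ε0 - vv β (flip2 i j ε0)⟫ = 1/2 := by
        simp only [inner_sub_left, inner_sub_right]
        rw [h1, hρ, hhalf, hsymm]; ring
      have h2 : ⟪β j, vv β ε0 - vv β (flip2 i j ε0)⟫ = ε0 j/16 := by
        have h : ⟪vv β (flip2 i b ε0), vv β ε0 - vv β (flip2 i j ε0)⟫ = 1/4 := by
          rw [hx]; exact hB14
        rw [hτeq, real_inner_smul_left] at h
        rcases hε0.1 j with hj | hj <;> rw [hj] at h ⊢ <;> linarith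
      rw [hx2] at hxq h2
      simp only [inner_add_left, inner_add_right, real_inner_smul_left,
        real_inner_smul_right] at hxq h2
      rw [hGjj] at hxq h2
      have hcomm := real_inner_comm (β j) (β i)
      rcases hε0.1 i with hi | hi <;> rcases hε0.1 j with hj | hj <;>
        rw [hi, hj] at hxq h2 <;> linarith [hxq, h2, hcomm]
    -- rerun with the pair (i, b)
    have hx'q : ⟪vv β ε0 - vv β (flip2 i b ε0), vv β ε0 - vv β (flip2 i b ε0)⟫ = 1/2 := by
      simp only [inner_sub_left, inner_sub_right]
      rw [h1, hρτ, hhalfτ, hτv0]; ring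
    have hv0x' : ⟪vv β ε0, vv β ε0 - vv β (flip2 i b ε0)⟫ = 1/2 := by
      simp only [inner_sub_right]
      rw [h1, hhalfτ]; norm_num
    have hτx' : ⟪vv β (flip2 i b ε0), vv β ε0 - vv β (flip2 i b ε0)⟫ = 0 := by
      simp only [inner_sub_right]
      rw [hτv0, hρτ]; norm_num
    by_cases hx'P : (vv β ε0 - vv β (flip2 i b ε0)) ∈ P
    · obtain ⟨a, c, hac, hrep⟩ := hc.twoFlipRep hε0 h1 hx'P hv0x'
      have hbothKill : ∀ (h : vv β ε0 - vv β (flip2 i b ε0) = vv β (flip2 i b ε0)), False := by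
        intro h
        rw [h, hρτ] at hτx'
        norm_num at hτx'
      rcases eq_or_ne a i with hai | hai
      · subst hai
        rcases eq_or_ne c b with hcb | hcb
        · subst hcb
          exact hbothKill hrep
        · exact hc.quarterKill hε0 hib (Ne.symm hcb) hac hGii hrep
      · rcases eq_or_ne a b with hab | hab
        · rcases eq_or_ne c i with hci | hci
          · rw [hab, hci, flip2_comm b i] at hrep
            exact hbothKill hrep
          · rw [hab] at hrep hac
            exact hc.quarterKill hε0 (Ne.symm hib) (Ne.symm hci) hac hGbb
              (by rw [flip2_comm b i]; exact hrep)
        · rcases eq_or_ne c i with hci | hci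
          · rw [hci, flip2_comm a i] at hrep
            exact hc.quarterKill hε0 hib (Ne.symm hab) (Ne.symm hai) hGii hrep
          · rcases eq_or_ne c b with hcb | hcb
            · rw [hcb, flip2_comm a b] at hrep
              exact hc.quarterKill hε0 (Ne.symm hib) (Ne.symm hai) (Ne.symm hab) hGbb
                (by rw [flip2_comm b i]; exact hrep)
            · exact hc.disjointKill hε0 hib hac hai hab hci hcb hrep
    · -- x' ∉ P
      have hbase0 : ReflClosure P (vv β ε0) := ReflClosure.base _ (hc.memP hε0)
      have hbaseτ : ReflClosure P (vv β (flip2 i b ε0)) := ReflClosure.base _ (hc.memP hτ)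
      have hsub : ReflClosure P (vv β (flip2 i b ε0) - vv β ε0) :=
        sub_mem_clos hbase0 hbaseτ (by rw [h1, hhalfτ]; norm_num)
      have hd : ⟪vv β (flip2 i b ε0) - vv β ε0, vv β (flip2 i b ε0) - vv β ε0⟫ = 1/2 := by
        simp only [inner_sub_left, inner_sub_right]
        rw [h1, hρτ, hhalfτ, hτv0]; ring
      have hxclos : ReflClosure P (vv β ε0 - vv β (flip2 i b ε0)) := by
        have := neg_mem_clos hsub (by rw [hd]; norm_num)
        rwa [neg_sub] at this
      have hwP := hc.reflQ hxclos hx'P (by rw [hx'q]; norm_num) (hc.memP hε0)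
      have hxv0' : ⟪vv β ε0 - vv β (flip2 i b ε0), vv β ε0⟫ = 1/2 := by
        rw [real_inner_comm]; exact hv0x'
      have hco : 2*⟪vv β ε0 - vv β (flip2 i b ε0), vv β ε0⟫
          / ⟪vv β ε0 - vv β (flip2 i b ε0), vv β ε0 - vv β (flip2 i b ε0)⟫ = 2 := by
        rw [hxv0', hx'q]; norm_num
      rw [hco] at hwP
      have hmod : vv β ε0 - (2:ℝ) • (vv β ε0 - vv β (flip2 i b ε0))
          = (2:ℝ) • vv β (flip2 i b ε0) - vv β ε0 := by module
      rw [hmod] at hwP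
      exact hc.auxW hε0 h1 hib hρτ hwP
  · exact hc.L13 hε0 h1 hib hρτ
  · exact hc.L14 hε0 h1 hib hρτ

lemma Ctx.L12 (hc : Ctx β P R) {ε0 : Fin 8 → ℝ} (hε0 : mE ε0)
    (h1 : ⟪vv β ε0, vv β ε0⟫ = 1) {i j : Fin 8} (hij : i ≠ j)
    (hρ : ⟪vv β (flip2 i j ε0), vv β (flip2 i j ε0)⟫ = 1/2) : False := by
  classical
  have hη : mE (flip2 i j ε0) := hε0.flip2 hij
  have hhalf := hc.halfInner hε0 h1 hij
  have hsymm : ⟪vv β (flip2 i j ε0), vv β ε0⟫ = 1/2 := by rw [real_inner_comm]; exact hhalf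
  have hxx : ⟪vv β ε0 - vv β (flip2 i j ε0), vv β ε0 - vv β (flip2 i j ε0)⟫ = 1/2 := by
    simp only [inner_sub_left, inner_sub_right]
    rw [h1, hρ, hhalf, hsymm]; ring
  have hxv0 : ⟪vv β ε0 - vv β (flip2 i j ε0), vv β ε0⟫ = 1/2 := by
    simp only [inner_sub_left]
    rw [h1, hsymm]; norm_num
  have hv0x : ⟪vv β ε0, vv β ε0 - vv β (flip2 i j ε0)⟫ = 1/2 := by
    rw [real_inner_comm]; exact hxv0
  have hxu : ⟪vv β (flip2 i j ε0), vv β ε0 - vv β (flip2 i j ε0)⟫ = 0 := by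
    simp only [inner_sub_right]
    rw [hρ, hsymm]; norm_num
  by_cases hxP : (vv β ε0 - vv β (flip2 i j ε0)) ∈ P
  · obtain ⟨a, c, hac, hrep⟩ := hc.twoFlipRep hε0 h1 hxP hv0x
    have hxueq : ∀ (h : vv β ε0 - vv β (flip2 i j ε0) = vv β (flip2 i j ε0)), False := by
      intro h
      rw [h, hρ] at hxu
      norm_num at hxu
    rcases eq_or_ne a i with hai | hai
    · subst hai
      rcases eq_or_ne c j with hcj | hcj
      · subst hcj
        exact hxueq hrep
      · exact hc.overlap12 hε0 h1 (Ne.symm hij) hcj (Ne.symm hac)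
          (by rw [flip2_comm j a]; exact hρ)
          (by rw [flip2_comm j a]; exact hrep)
    · rcases eq_or_ne a j with haj | haj
      · subst haj
        rcases eq_or_ne c i with hci | hci
        · subst hci
          rw [flip2_comm a c] at hrep
          exact hxueq hrep
        · exact hc.overlap12 hε0 h1 hij hci (Ne.symm hac) hρ hrep
      · rcases eq_or_ne c i with hci | hci
        · subst hci
          rw [flip2_comm a c] at hrep
          exact hc.overlap12 hε0 h1 (Ne.symm hij) haj hai
            (by rw [flip2_comm j c]; exact hρ)
            (by rw [flip2_comm j c]; exact hrep)
        · rcases eq_or_ne c j with hcj | hcj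
          · subst hcj
            rw [flip2_comm a c] at hrep
            exact hc.overlap12 hε0 h1 hij hai haj hρ hrep
          · exact hc.disjointKill hε0 hij hac hai haj hci hcj hrep
  · have hbase0 : ReflClosure P (vv β ε0) := ReflClosure.base _ (hc.memP hε0)
    have hbaseη : ReflClosure P (vv β (flip2 i j ε0)) := ReflClosure.base _ (hc.memP hη)
    have hsub : ReflClosure P (vv β (flip2 i j ε0) - vv β ε0) :=
      sub_mem_clos hbase0 hbaseη (by rw [h1, hhalf]; norm_num)
    have hd : ⟪vv β (flip2 i j ε0) - vv β ε0, vv β (flip2 i j ε0) - vv β ε0⟫ = 1/2 := by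
      simp only [inner_sub_left, inner_sub_right]
      rw [h1, hρ, hhalf, hsymm]; ring
    have hxclos : ReflClosure P (vv β ε0 - vv β (flip2 i j ε0)) := by
      have := neg_mem_clos hsub (by rw [hd]; norm_num)
      rwa [neg_sub] at this
    have hwP := hc.reflQ hxclos hxP (by rw [hxx]; norm_num) (hc.memP hε0)
    have hco : 2*⟪vv β ε0 - vv β (flip2 i j ε0), vv β ε0⟫
        / ⟪vv β ε0 - vv β (flip2 i j ε0), vv β ε0 - vv β (flip2 i j ε0)⟫ = 2 := by
      rw [hxv0, hxx]; norm_num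
    rw [hco] at hwP
    have hmod : vv β ε0 - (2:ℝ) • (vv β ε0 - vv β (flip2 i j ε0))
        = (2:ℝ) • vv β (flip2 i j ε0) - vv β ε0 := by module
    rw [hmod] at hwP
    exact hc.auxW hε0 h1 hij hρ hwP

lemma Ctx.prop (hc : Ctx β P R) {ε0 : Fin 8 → ℝ} (hε0 : mE ε0)
    (h1 : ⟪vv β ε0, vv β ε0⟫ = 1) {i j : Fin 8} (hij : i ≠ j) :
    ⟪vv β (flip2 i j ε0), vv β (flip2 i j ε0)⟫ = 1 := by
  rcases hc.rho_mem hε0 h1 hij with h | h | h | h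
  · exact h
  · exact absurd h (fun h => hc.L12 hε0 h1 hij h)
  · exact absurd h (fun h => hc.L13 hε0 h1 hij h)
  · exact absurd h (fun h => hc.L14 hε0 h1 hij h)

lemma sg_mul_of_ne {ε ζ : Fin 8 → ℝ} (hε : Sg ε) (hζ : Sg ζ) {m : Fin 8}
    (h : ε m ≠ ζ m) : ε m * ζ m = -1 := by
  rcases hε m with h1 | h1 <;> rcases hζ m with h2 | h2 <;>
    rw [h1, h2] at h ⊢ <;> norm_num at *

lemma disag_even {ε ζ : Fin 8 → ℝ} (hε : mE ε) (hζ : mE ζ) :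
    Even (Finset.univ.filter (fun m => ε m ≠ ζ m)).card := by
  classical
  have hprod : ∏ m, (ε m * ζ m) = 1 := by
    rw [Finset.prod_mul_distrib, hε.2, hζ.2]; norm_num
  have hsplit := Finset.prod_filter_mul_prod_filter_not Finset.univ
    (fun m => ε m ≠ ζ m) (fun m => ε m * ζ m)
  have h1 : ∏ m ∈ Finset.univ.filter (fun m => ε m ≠ ζ m), (ε m * ζ m)
      = (-1)^(Finset.univ.filter (fun m => ε m ≠ ζ m)).card := by
    rw [Finset.prod_congr rfl (fun m hm => sg_mul_of_ne hε.1 hζ.1 (Finset.mem_filter.1 hm).2)]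
    rw [Finset.prod_const]
  have h2 : ∏ m ∈ Finset.univ.filter (fun m => ¬ ε m ≠ ζ m), (ε m * ζ m) = 1 := by
    apply Finset.prod_eq_one
    intro m hm
    have : ε m = ζ m := not_not.1 (Finset.mem_filter.1 hm).2
    rw [this, sg_sq hζ.1 m]
  rw [h1, h2, mul_one, hprod] at hsplit
  rcases Int.even_or_odd (Finset.univ.filter (fun m => ε m ≠ ζ m)).card with h | h
  · exact_mod_cast h
  · exfalso
    rw [Odd.neg_one_pow ?_] at hsplit
    · norm_num at hsplit
    · exact_mod_cast h

lemma flip2_disag {ε ζ : Fin 8 → ℝ} (hε : Sg ε) (hζ : Sg ζ) {i j : Fin 8} (hij : i ≠ j)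
    (hi : ε i ≠ ζ i) (hj : ε j ≠ ζ j) :
    Finset.univ.filter (fun m => flip2 i j ε m ≠ ζ m)
      = ((Finset.univ.filter (fun m => ε m ≠ ζ m)).erase i).erase j := by
  classical
  ext m
  simp only [Finset.mem_filter, Finset.mem_erase, Finset.mem_univ, true_and]
  constructor
  · intro h
    rcases eq_or_ne m i with hmi | hmi
    · exfalso
      subst hmi
      rw [flip2_left] at h
      have := sg_mul_of_ne hε hζ hi
      rcases hε m with h1 | h1 <;> rcases hζ m with h2 | h2 <;>
        rw [h1, h2] at h this <;> norm_num at *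
    · rcases eq_or_ne m j with hmj | hmj
      · exfalso
        subst hmj
        rw [flip2_right] at h
        have := sg_mul_of_ne hε hζ hj
        rcases hε m with h1 | h1 <;> rcases hζ m with h2 | h2 <;>
          rw [h1, h2] at h this <;> norm_num at *
      · rw [flip2_other hmi hmj] at h
        exact ⟨hmj, hmi, h⟩
  · intro ⟨hmj, hmi, h⟩
    rw [flip2_other hmi hmj]
    exact h

lemma Ctx.allMax (hc : Ctx β P R) {ε0 : Fin 8 → ℝ} (hε0 : mE ε0)
    (h1 : ⟪vv β ε0, vv β ε0⟫ = 1) :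
    ∀ ε, mE ε → ⟪vv β ε, vv β ε⟫ = 1 := by
  classical
  suffices H : ∀ n : ℕ, ∀ ε, mE ε →
      (Finset.univ.filter (fun m => ε m ≠ ε0 m)).card = n → ⟪vv β ε, vv β ε⟫ = 1 by
    intro ε hε
    exact H _ ε hε rfl
  intro n
  induction n using Nat.strong_induction_on with
  | _ n ih =>
    intro ε hε hcard
    rcases Nat.eq_zero_or_pos n with h0 | hpos
    · subst h0
      have hempty : Finset.univ.filter (fun m => ε m ≠ ε0 m) = ∅ :=
        Finset.card_eq_zero.1 hcard
      have : ε = ε0 := by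
        funext m
        by_contra hne
        have : m ∈ Finset.univ.filter (fun m => ε m ≠ ε0 m) := by
          simp [hne]
        rw [hempty] at this
        simp at this
      rw [this]
      exact h1
    · have heven : Even n := hcard ▸ disag_even hε hε0
      have h2n : 2 ≤ n := by
        rcases heven with ⟨k, hk⟩
        omega
      have hne : (Finset.univ.filter (fun m => ε m ≠ ε0 m)).Nonempty := by
        rw [← Finset.card_pos, hcard]; omega
      obtain ⟨i, hi⟩ := hne
      have hne2 : ((Finset.univ.filter (fun m => ε m ≠ ε0 m)).erase i).Nonempty := by
        rw [← Finset.card_pos, Finset.card_erase_of_mem hi, hcard]; omega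
      obtain ⟨j, hj⟩ := hne2
      have hji : j ≠ i := (Finset.mem_erase.1 hj).1
      have hjD : j ∈ Finset.univ.filter (fun m => ε m ≠ ε0 m) := (Finset.mem_erase.1 hj).2
      have hdi : ε i ≠ ε0 i := (Finset.mem_filter.1 hi).2
      have hdj : ε j ≠ ε0 j := (Finset.mem_filter.1 hjD).2
      have hij : i ≠ j := Ne.symm hji
      have hε' : mE (flip2 i j ε) := hε.flip2 hij
      have hcard' : (Finset.univ.filter (fun m => flip2 i j ε m ≠ ε0 m)).card = n - 2 := by
        rw [flip2_disag hε.1 hε0.1 hij hdi hdj]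
        rw [Finset.card_erase_of_mem hj, Finset.card_erase_of_mem hi, hcard]
        omega
      have hq' : ⟪vv β (flip2 i j ε), vv β (flip2 i j ε)⟫ = 1 :=
        ih (n-2) (by omega) _ hε' hcard'
      have := hc.prop hε' hq' hij
      rwa [flip2_flip2] at this

lemma Ctx.gram (hc : Ctx β P R) {ε0 : Fin 8 → ℝ} (hε0 : mE ε0)
    (h1 : ⟪vv β ε0, vv β ε0⟫ = 1) (k n : Fin 8) :
    ⟪β k, β n⟫ = if k = n then 1/8 else 0 := by
  classical
  have hall := hc.allMax hε0 h1
  have hB : ∀ ε, mE ε → ∀ m, ⟪vv β ε, β m⟫ = ε m / 8 :=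
    fun ε hε m => hc.lemB hε (hall ε hε) m
  have hsm : ∀ p : Fin 8, ∑ m, ⟪β m, β p⟫ = 1/8 := by
    intro p
    have h := hB _ mE_one p
    rw [inner_vv_left] at h
    simpa using h
  have hpair : ∀ p a c : Fin 8, a ≠ c → a ≠ p → c ≠ p →
      ⟪β a, β p⟫ + ⟪β c, β p⟫ = 0 := by
    intro p a c hac hap hcp
    have h := hB _ (mE_one.flip2 hac) p
    rw [inner_vv_left, sum_flip2_mul hac (fun _ => (1:ℝ)) (fun m => ⟪β m, β p⟫)] at h
    rw [flip2_other (Ne.symm hap) (Ne.symm hcp)] at h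
    have h2 : ∑ m, (fun _ => (1:ℝ)) m * ⟪β m, β p⟫ = 1/8 := by
      simpa using hsm p
    rw [h2] at h
    simp at h
    linarith
  have hoff : ∀ p a : Fin 8, a ≠ p → ⟪β a, β p⟫ = 0 := by
    intro p a hap
    obtain ⟨l, m, hlm, hla, hlp, hma, hmp⟩ := exists_pair_out2 a p
    have e1 := hpair p a l (Ne.symm hla) hap hlp
    have e2 := hpair p a m (Ne.symm hma) hap hmp
    have e3 := hpair p l m hlm hlp hmp
    linarith
  rcases eq_or_ne k n with hkn | hkn
  · subst hkn
    have h := hsm k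
    have hdec : ∑ m, ⟪β m, β k⟫ = ⟪β k, β k⟫ + ∑ m ∈ Finset.univ.erase k, ⟪β m, β k⟫ :=
      (Finset.add_sum_erase _ _ (Finset.mem_univ k)).symm
    have hz : ∑ m ∈ Finset.univ.erase k, ⟪β m, β k⟫ = 0 := by
      apply Finset.sum_eq_zero
      intro m hm
      exact hoff k m (Finset.mem_erase.1 hm).1
    rw [hdec, hz] at h
    rw [if_pos rfl]
    linarith
  · rw [if_neg hkn]
    exact hoff n k hkn

def sgn (b : Bool) : ℝ := if b then 1 else -1

def EB : Finset (Fin 8 → Bool) :=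
  Finset.univ.filter (fun f => (Finset.univ.filter (fun j => f j = false)).card % 2 = 0)

set_option maxRecDepth 10000 in
lemma EB_card : EB.card = 128 := by decide

lemma prod_sgn (f : Fin 8 → Bool) :
    ∏ j, sgn (f j) = (-1 : ℝ)^((Finset.univ.filter (fun j => f j = false)).card) := by
  classical
  have hsplit := Finset.prod_filter_mul_prod_filter_not Finset.univ
    (fun j => f j = false) (fun j => sgn (f j))
  have h1 : ∏ j ∈ Finset.univ.filter (fun j => f j = false), sgn (f j)
      = (-1 : ℝ)^((Finset.univ.filter (fun j => f j = false)).card) := by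
    rw [Finset.prod_congr rfl (fun j hj => ?_), Finset.prod_const]
    rw [(Finset.mem_filter.1 hj).2]
    rfl
  have h2 : ∏ j ∈ Finset.univ.filter (fun j => ¬ f j = false), sgn (f j) = 1 := by
    apply Finset.prod_eq_one
    intro j hj
    have := (Finset.mem_filter.1 hj).2
    have hb : f j = true := by
      cases hfj : f j
      · exact absurd hfj this
      · rfl
    rw [hb]
    rfl
  rw [h1, h2, mul_one] at hsplit
  rw [← hsplit]

lemma sgn_mem_mE {f : Fin 8 → Bool} (hf : f ∈ EB) : mE (fun j => sgn (f j)) := by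
  constructor
  · intro j
    by_cases h : f j <;> simp [sgn, h]
  · rw [prod_sgn f]
    have := (Finset.mem_filter.1 hf).2
    have heven : Even ((Finset.univ.filter (fun j => f j = false)).card) :=
      Nat.even_iff.2 this
    exact Even.neg_one_pow heven

lemma mE_mem_sgn {ε : Fin 8 → ℝ} (hε : mE ε) :
    ∃ f ∈ EB, (fun j => sgn (f j)) = ε := by
  classical
  refine ⟨fun j => if ε j = 1 then true else false, ?_, ?_⟩
  · have hfe : (fun j => sgn (if ε j = 1 then true else false)) = ε := by
      funext j
      rcases hε.1 j with h | h <;> norm_num [sgn, h]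
    rw [EB]
    simp only [Finset.mem_filter, Finset.mem_univ, true_and]
    rw [← Nat.even_iff]
    by_contra hodd
    rw [Nat.not_even_iff_odd] at hodd
    have := prod_sgn (fun j => if ε j = 1 then true else false)
    rw [Odd.neg_one_pow hodd] at this
    have h2 : ∏ j, sgn (if ε j = 1 then true else false) = 1 := by
      rw [show (fun j => sgn (if ε j = 1 then true else false)) = ε from hfe] at this ⊢
      exact hε.2
    rw [h2] at this
    norm_num at this
  · funext j
    rcases hε.1 j with h | h <;> norm_num [sgn, h]

lemma inj_of_card {β : Fin 8 → V} {P : Set V}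
    (hPdef : P = {v : V | ∃ ε : Fin 8 → ℝ,
      (∀ j, ε j = 1 ∨ ε j = -1) ∧ (∏ j, ε j) = 1 ∧ v = ∑ j, ε j • β j})
    (hcard : P.ncard = 128) :
    ∀ ε ε', mE ε → mE ε' → vv β ε = vv β ε' → ε = ε' := by
  classical
  have hPim : P = ↑(EB.image (fun f => vv β (fun j => sgn (f j)))) := by
    rw [hPdef]
    ext p
    constructor
    · rintro ⟨ε, h1, h2, h3⟩
      obtain ⟨f, hf, hfe⟩ := mE_mem_sgn ⟨h1, h2⟩
      simp only [Finset.coe_image, Set.mem_image, Finset.mem_coe]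
      exact ⟨f, hf, by rw [hfe]; exact h3.symm⟩
    · intro hp
      simp only [Finset.coe_image, Set.mem_image, Finset.mem_coe] at hp
      obtain ⟨f, hf, hfe⟩ := hp
      have := sgn_mem_mE hf
      exact ⟨fun j => sgn (f j), this.1, this.2, hfe.symm⟩
  have hc2 : (EB.image (fun f => vv β (fun j => sgn (f j)))).card = EB.card := by
    rw [← Set.ncard_coe_finset, ← hPim, hcard, EB_card]
  have hinjon := Finset.card_image_iff.1 hc2
  intro ε ε' hε hε' hv
  obtain ⟨f, hf, hfe⟩ := mE_mem_sgn hε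
  obtain ⟨f', hf', hfe'⟩ := mE_mem_sgn hε'
  have : f = f' := by
    apply hinjon (Finset.mem_coe.2 hf) (Finset.mem_coe.2 hf')
    show vv β (fun j => sgn (f j)) = vv β (fun j => sgn (f' j))
    rw [hfe, hfe']
    exact hv
  rw [← hfe, ← hfe', this]


end Stmt15Aux

/-- If `P = {∑_{j=1}^8 εⱼβⱼ : ∏ εⱼ = 1}` is an admissible subsystem of roots with `2⁷`
distinct elements, normalized so that the maximal norm of elements of `P` is `1`, then up
to permutation of the subscripts and sign changes `⟨βᵢ, βⱼ⟩ = (1/8)δᵢⱼ`. -/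
theorem stmt_15 (β : Fin 8 → V) (P : Set V)
    (hPdef : P = {v : V | ∃ ε : Fin 8 → ℝ,
      (∀ j, ε j = 1 ∨ ε j = -1) ∧ (∏ j, ε j) = 1 ∧ v = ∑ j, ε j • β j})
    (hP : IsAdmissible P) (hcard : P.ncard = 128)
    (hmax : ∀ v ∈ P, ‖v‖ ≤ 1) (hone : ∃ v ∈ P, ‖v‖ = 1) :
    ∃ (σ : Equiv.Perm (Fin 8)) (s : Fin 8 → ℝ), (∀ j, s j = 1 ∨ s j = -1) ∧
      ∀ i j, ⟪s i • β (σ i), s j • β (σ j)⟫ = if i = j then 1/8 else 0 := by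
  classical
  obtain ⟨⟨hspan, R, hRsys, hPR⟩, hQ⟩ := hP
  have hq1 : ∀ ε, Stmt15Aux.mE ε → ⟪Stmt15Aux.vv β ε, Stmt15Aux.vv β ε⟫ ≤ 1 := by
    intro ε hε
    have hmem : Stmt15Aux.vv β ε ∈ P := by
      rw [hPdef]; exact ⟨ε, hε.1, hε.2, rfl⟩
    have hn := hmax _ hmem
    rw [real_inner_self_eq_norm_mul_norm]
    nlinarith [norm_nonneg (Stmt15Aux.vv β ε)]
  have hc : Stmt15Aux.Ctx β P R :=
    ⟨hPdef, hRsys.1, hPR, hQ, Stmt15Aux.inj_of_card hPdef hcard, hq1⟩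
  obtain ⟨v, hvP, hv1⟩ := hone
  obtain ⟨ε0, hε0, hveq⟩ := hc.repP hvP
  subst hveq
  have h1 : ⟪Stmt15Aux.vv β ε0, Stmt15Aux.vv β ε0⟫ = 1 := by
    rw [real_inner_self_eq_norm_mul_norm, hv1]; norm_num
  refine ⟨Equiv.refl _, fun _ => 1, fun j => Or.inl rfl, fun a c => ?_⟩
  simpa using hc.gram hε0 h1 a c
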